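/- arXiv:1407.4259 — 3 statements merged into one kernel-verified Lean document; each statement's English description precedes it below -/
import Mathlib

section
/- Let $U \subseteq \{0,1\}^\mathbb{N}$ be a set which is a union of disjoint cylinders $[u_i]$ with $\sum_i 2^{-|u_i|} < 1$. If every tail $x_k x_{k+1} x_{k+2}\dots$ of an infinite binary sequence $x$ belongs to $U$, then $x$ lies in the intersection of a decreasing sequence of open sets $V_n$ with $\mu(V_n) \le \rho^n$ where $\rho = \sum_i 2^{-|u_i|} < 1$; in particular $x$ belongs to a set of measure zero. -/
open scoped Classical ENNReal

/-- `f` is partial computable relative to oracle `O`: there is a partial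
computable functional `F` that, given the input together with a finite initial
segment of the oracle, may produce the answer; correct on oracle prefixes and
total on the domain of `f`. -/
def PartrecIn {α β : Type} [Primcodable α] [Primcodable β]
    (O : ℕ → Bool) (f : α →. β) : Prop :=
  ∃ F : α × List Bool →. β, Partrec F ∧
    (∀ a n b, b ∈ F (a, (List.range n).map O) → f a = Part.some b) ∧
    (∀ a b, b ∈ f a → ∃ n, b ∈ F (a, (List.range n).map O))

/-- The trivial (computable) oracle; relativization to it yields the
unrelativized notions. -/
def triv : ℕ → Bool := fun _ => false

/-- A prefix-free machine relative to oracle `O`: a partial `O`-computable map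
from binary strings (programs) to natural numbers (coding arbitrary finite
objects), whose domain is prefix-free. -/
structure PrefixMachineIn (O : ℕ → Bool) where
  M : List Bool →. ℕ
  partrec : PartrecIn O M
  prefixFree : ∀ p q : List Bool, (M p).Dom → (M q).Dom → p <+: q → p = q

/-- The complexity of `x` with respect to machine `U`: the least length of a
program producing `x`. -/
noncomputable def Kof {O : ℕ → Bool} (U : PrefixMachineIn O) (x : ℕ) : ℕ :=
  sInf {n | ∃ p : List Bool, p.length = n ∧ x ∈ U.M p}

/-- `U` is a universal prefix-free machine relative to `O`. -/
def IsUniversal {O : ℕ → Bool} (U : PrefixMachineIn O) : Prop :=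
  (∀ x : ℕ, ∃ p : List Bool, x ∈ U.M p) ∧
  ∀ M : PrefixMachineIn O, ∃ c : ℕ, ∀ (p : List Bool) (x : ℕ), x ∈ M.M p →
    ∃ q : List Bool, q.length ≤ p.length + c ∧ x ∈ U.M q

/-- The length-`n` prefix of an infinite binary sequence, as a finite string. -/
def preSeq (a : ℕ → Bool) (n : ℕ) : List Bool := (List.range n).map a

/-- Code a finite binary string as a natural number. -/
def strCode (u : List Bool) : ℕ := Encodable.encode u

/-- `a` is `K`-trivial with respect to the machine `U`. -/
def KTrivial {O : ℕ → Bool} (U : PrefixMachineIn O) (a : ℕ → Bool) : Prop :=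
  ∃ c : ℕ, ∀ n : ℕ, Kof U (strCode (preSeq a n)) ≤ Kof U n + c

/-- The basic cylinder determined by a finite string. -/
def cyl (u : List Bool) : Set (ℕ → Bool) :=
  {x | ∀ i : ℕ, ∀ h : i < u.length, x i = u.get ⟨i, h⟩}

/-- The (outer) uniform measure on Cantor space: infimum of `∑ 2^{-|c i|}`
over countable coverings by cylinders. -/
noncomputable def cmeas (S : Set (ℕ → Bool)) : ℝ≥0∞ :=
  ⨅ (c : ℕ → List Bool) (_ : S ⊆ ⋃ i, cyl (c i)),
    ∑' i : ℕ, (2 : ℝ≥0∞)⁻¹ ^ (c i).length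

/-- A set of strings is computably enumerable relative to `O`. -/
def CEIn {α : Type} [Primcodable α] (O : ℕ → Bool) (S : Set α) : Prop :=
  ∃ f : α →. Unit, PartrecIn O f ∧ ∀ u, u ∈ S ↔ (f u).Dom

/-- `U` is an `O`-effectively open subset of Cantor space. -/
def EffOpenIn (O : ℕ → Bool) (U : Set (ℕ → Bool)) : Prop :=
  ∃ S : Set (List Bool), CEIn O S ∧ U = ⋃ u ∈ S, cyl u

/-- A Martin-Löf test relative to `O`: a uniformly `O`-effectively open
sequence of sets with `cmeas (U n) ≤ 2 ^ (-n)`. -/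
def MLTestIn (O : ℕ → Bool) (U : ℕ → Set (ℕ → Bool)) : Prop :=
  (∃ f : ℕ × List Bool →. Unit, PartrecIn O f ∧
      ∀ n, U n = ⋃ u ∈ {u : List Bool | (f (n, u)).Dom}, cyl u) ∧
  ∀ n, cmeas (U n) ≤ (2 : ℝ≥0∞)⁻¹ ^ n

/-- Martin-Löf randomness relative to oracle `O`. -/
def MLRandomIn (O : ℕ → Bool) (x : ℕ → Bool) : Prop :=
  ∀ U : ℕ → Set (ℕ → Bool), MLTestIn O U → x ∉ ⋂ n, U n

/-- Turing reducibility between infinite binary sequences. -/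
def TuringLE (a b : ℕ → Bool) : Prop :=
  PartrecIn b (fun n => Part.some (a n) : ℕ →. Bool)

/-- The halting problem `𝟎'` as an infinite binary sequence. -/
noncomputable def halting : ℕ → Bool :=
  fun n => decide (((Denumerable.ofNat Nat.Partrec.Code n).eval n).Dom)

/-- The tail of `x` starting at position `k`. -/
def seqTail (x : ℕ → Bool) (k : ℕ) : ℕ → Bool := fun n => x (n + k)

/-- Prepend a finite string to an infinite sequence. -/
def appendSeq (v : List Bool) (y : ℕ → Bool) : ℕ → Bool :=
  fun i => if h : i < v.length then v.get ⟨i, h⟩ else y (i - v.length)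

/-- The set of sequences that are a concatenation of `n` strings from the list
`u` followed by an arbitrary infinite tail. -/
def catSet (u : ℕ → List Bool) (n : ℕ) : Set (ℕ → Bool) :=
  {x | ∃ l : List ℕ, l.length = n ∧ ∃ y : ℕ → Bool, x = appendSeq ((l.map u).flatten) y}

section KuceraAux

open List in
lemma appendSeq_append (v w : List Bool) (y : ℕ → Bool) :
    appendSeq (v ++ w) y = appendSeq v (appendSeq w y) := by
  funext i
  simp only [appendSeq, List.length_append, List.get_eq_getElem]
  by_cases h1 : i < v.length
  · rw [dif_pos (lt_of_lt_of_le h1 (Nat.le_add_right _ _)), dif_pos h1,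
      List.getElem_append_left h1]
  · rw [dif_neg h1]
    by_cases h2 : i < v.length + w.length
    · have h3 : i - v.length < w.length := by omega
      rw [dif_pos h2, dif_pos h3, List.getElem_append_right (by omega)]
    · have h3 : ¬ i - v.length < w.length := by omega
      rw [dif_neg h2, dif_neg h3]
      congr 1
      omega

lemma appendSeq_mem_cyl (w : List Bool) (y : ℕ → Bool) : appendSeq w y ∈ cyl w := by
  intro i h
  simp [appendSeq, h]

lemma seqTail_appendSeq (w : List Bool) (y : ℕ → Bool) :
    seqTail (appendSeq w y) w.length = y := by
  funext n
  have h1 : ¬ n + w.length < w.length := by omega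
  simp [seqTail, appendSeq, h1]

lemma eq_appendSeq_of_mem_cyl {w : List Bool} {x : ℕ → Bool} (h : x ∈ cyl w) :
    x = appendSeq w (seqTail x w.length) := by
  funext i
  simp only [appendSeq, seqTail, List.get_eq_getElem]
  by_cases h1 : i < w.length
  · rw [dif_pos h1]
    exact h i h1
  · rw [dif_neg h1]
    congr 1
    omega

lemma cmeas_mono {S T : Set (ℕ → Bool)} (h : S ⊆ T) : cmeas S ≤ cmeas T :=
  le_iInf fun c => le_iInf fun hc => iInf₂_le c (h.trans hc)

lemma cmeas_le_encodable {ι : Type} [Encodable ι] (g : ι → List Bool)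
    {S : Set (ℕ → Bool)} (hS : S ⊆ ⋃ i, cyl (g i)) :
    cmeas S ≤ ∑' i, (2 : ℝ≥0∞)⁻¹ ^ (g i).length := by
  have key : ∀ k : ℕ, cmeas S ≤ (∑' i, (2 : ℝ≥0∞)⁻¹ ^ (g i).length) + 2⁻¹ ^ k := by
    intro k
    set c : ℕ → List Bool := fun m =>
      (Encodable.decode₂ ι m).elim (List.replicate (m + k + 1) true) g with hc
    have hcov : S ⊆ ⋃ m, cyl (c m) := by
      intro x hx
      obtain ⟨_, ⟨i, rfl⟩, hxi⟩ := hS hx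
      refine Set.mem_iUnion.2 ⟨Encodable.encode i, ?_⟩
      simpa [hc, Encodable.decode₂_encode] using hxi
    refine le_trans (iInf₂_le c hcov) ?_
    have hb : ∀ m, (2 : ℝ≥0∞)⁻¹ ^ (c m).length ≤
        ((Encodable.decode₂ ι m).elim 0 fun i => (2 : ℝ≥0∞)⁻¹ ^ (g i).length) +
          2⁻¹ ^ (m + k + 1) := by
      intro m
      cases h : Encodable.decode₂ ι m with
      | none => simp [hc, h]
      | some i =>
        simp only [hc, h, Option.elim_some]
        exact le_self_add
    refine le_trans (ENNReal.tsum_le_tsum hb) ?_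
    rw [ENNReal.tsum_add]
    gcongr
    · rw [← Function.Injective.tsum_eq (Encodable.encode_injective (α := ι))
        (f := fun m => (Encodable.decode₂ ι m).elim 0
          fun i => (2 : ℝ≥0∞)⁻¹ ^ (g i).length)]
      · simp [Encodable.decode₂_encode]
      · intro m hm
        rcases hd : Encodable.decode₂ ι m with _ | i
        · simp [Function.mem_support, hd] at hm
        · exact ⟨i, Encodable.mem_decode₂.mp hd⟩
    · refine le_of_eq ?_
      have h1 : ∀ m : ℕ, (2 : ℝ≥0∞)⁻¹ ^ (m + k + 1) = 2⁻¹ ^ m * 2⁻¹ ^ (k + 1) := by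
        intro m
        rw [show m + k + 1 = m + (k + 1) by ring, pow_add]
      calc ∑' m : ℕ, (2 : ℝ≥0∞)⁻¹ ^ (m + k + 1)
          = (∑' m : ℕ, (2 : ℝ≥0∞)⁻¹ ^ m) * 2⁻¹ ^ (k + 1) := by
            simp_rw [h1]; exact ENNReal.tsum_mul_right
        _ = 2 * (2⁻¹ ^ k * 2⁻¹) := by
            rw [ENNReal.tsum_geometric, ENNReal.one_sub_inv_two, pow_succ]
            norm_num
        _ = 2⁻¹ ^ k := by
            rw [mul_comm, mul_assoc, ENNReal.inv_mul_cancel two_ne_zero ENNReal.ofNat_ne_top,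
              mul_one]
  refine ENNReal.le_of_forall_pos_le_add fun ε hε _ => ?_
  obtain ⟨k, hk⟩ := ENNReal.exists_inv_two_pow_lt
    (show (ε : ℝ≥0∞) ≠ 0 by exact_mod_cast hε.ne')
  exact (key k).trans (add_le_add le_rfl hk.le)

lemma tsum_pi_pow (a : ℕ → ℝ≥0∞) (n : ℕ) :
    ∑' f : Fin n → ℕ, ∏ j, a (f j) = (∑' i, a i) ^ n := by
  induction n with
  | zero =>
    rw [tsum_eq_single (fun i : Fin 0 => 0) (fun b hb => absurd (Subsingleton.elim _ _) hb)]
    simp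
  | succ n ih =>
    calc ∑' f : Fin (n + 1) → ℕ, ∏ j, a (f j)
        = ∑' p : ℕ × (Fin n → ℕ), ∏ j, a ((Fin.consEquiv fun _ : Fin (n + 1) => ℕ) p j) :=
          ((Fin.consEquiv fun _ : Fin (n + 1) => ℕ).tsum_eq
            (fun f : Fin (n + 1) → ℕ => ∏ j, a (f j))).symm
      _ = ∑' p : ℕ × (Fin n → ℕ), a p.1 * ∏ j, a (p.2 j) := by
          refine tsum_congr fun p => ?_
          simp [Fin.consEquiv, Fin.prod_univ_succ]
      _ = ∑' i : ℕ, ∑' f : Fin n → ℕ, a i * ∏ j, a (f j) :=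
          ENNReal.tsum_prod (f := fun (i : ℕ) (f : Fin n → ℕ) => a i * ∏ j, a (f j))
      _ = ∑' i : ℕ, a i * (∑' i, a i) ^ n := by
          refine tsum_congr fun i => ?_
          rw [ENNReal.tsum_mul_left, ih]
      _ = (∑' i, a i) ^ (n + 1) := by
          rw [ENNReal.tsum_mul_right, pow_succ, mul_comm]

end KuceraAux
/-- if every tail of `x` belongs to the union of the disjoint
cylinders `[u i]`, of total measure `ρ < 1`, then `x` lies in the intersection
of the decreasing sequence of sets `catSet u n` of measures at most `ρ ^ n`;
in particular `x` belongs to a set of measure zero. -/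
theorem tails_in_U_implies_null (u : ℕ → List Bool)
    (hdisj : ∀ i j : ℕ, i ≠ j → ¬ u i <+: u j)
    (ρ : ℝ≥0∞) (hρ : ρ = ∑' i : ℕ, (2 : ℝ≥0∞)⁻¹ ^ (u i).length) (hlt : ρ < 1)
    (x : ℕ → Bool) (htail : ∀ k : ℕ, seqTail x k ∈ ⋃ i : ℕ, cyl (u i)) :
    (∀ n, x ∈ catSet u n) ∧ Antitone (catSet u) ∧
      (∀ n, cmeas (catSet u n) ≤ ρ ^ n) ∧ cmeas (⋂ n, catSet u n) = 0 := by
  have happ0 : ∀ y : ℕ → Bool, appendSeq [] y = y := by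
    intro y; funext i; simp [appendSeq]
  -- membership
  have hmem : ∀ n, x ∈ catSet u n := by
    intro n
    induction n with
    | zero => exact ⟨[], rfl, x, (happ0 x).symm⟩
    | succ n ih =>
      obtain ⟨l, hl, y, hxy⟩ := ih
      have ht := htail ((l.map u).flatten).length
      rw [hxy, seqTail_appendSeq] at ht
      obtain ⟨_, ⟨i, rfl⟩, hyi⟩ := ht
      obtain ⟨z, hz⟩ : ∃ z, y = appendSeq (u i) z := ⟨_, eq_appendSeq_of_mem_cyl hyi⟩
      refine ⟨l ++ [i], by simp [hl], z, ?_⟩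
      rw [hxy, hz, List.map_append, List.flatten_append, appendSeq_append]
      simp
  -- antitone
  have hanti : Antitone (catSet u) := by
    refine antitone_nat_of_succ_le fun n z hz => ?_
    obtain ⟨l, hl, y, hxy⟩ := hz
    have hne : l ≠ [] := by intro h; rw [h] at hl; simp at hl
    refine ⟨l.dropLast, by simp [hl], appendSeq (u (l.getLast hne)) y, ?_⟩
    conv_lhs => rw [hxy, ← List.dropLast_append_getLast hne]
    rw [List.map_append, List.flatten_append, appendSeq_append]
    simp
  -- measure bound
  have hmeas : ∀ n, cmeas (catSet u n) ≤ ρ ^ n := by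
    intro n
    set g : (Fin n → ℕ) → List Bool := fun f => ((List.ofFn f).map u).flatten with hg
    have hcov : catSet u n ⊆ ⋃ f : Fin n → ℕ, cyl (g f) := by
      rintro z ⟨l, hl, y, rfl⟩
      subst hl
      refine Set.mem_iUnion.2 ⟨l.get, ?_⟩
      rw [hg]
      simp only [List.ofFn_get]
      exact appendSeq_mem_cyl _ _
    refine le_trans (cmeas_le_encodable g hcov) ?_
    have hlen : ∀ f : Fin n → ℕ, (2 : ℝ≥0∞)⁻¹ ^ (g f).length
        = ∏ j, (2 : ℝ≥0∞)⁻¹ ^ (u (f j)).length := by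
      intro f
      rw [hg]
      simp only [List.length_flatten, List.map_map]
      rw [show (List.map (List.length ∘ u) (List.ofFn f)).sum
          = ∑ j, (u (f j)).length by rw [List.map_ofFn, List.sum_ofFn]; rfl]
      rw [← Finset.prod_pow_eq_pow_sum]
    refine le_of_eq ?_
    calc ∑' f : Fin n → ℕ, (2 : ℝ≥0∞)⁻¹ ^ (g f).length
        = ∑' f : Fin n → ℕ, ∏ j, (2 : ℝ≥0∞)⁻¹ ^ (u (f j)).length := tsum_congr hlen
      _ = (∑' i : ℕ, (2 : ℝ≥0∞)⁻¹ ^ (u i).length) ^ n := tsum_pi_pow (fun i => (2 : ℝ≥0∞)⁻¹ ^ (u i).length) n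
      _ = ρ ^ n := by rw [hρ]
  refine ⟨hmem, hanti, hmeas, ?_⟩
  have hle : ∀ n, cmeas (⋂ n, catSet u n) ≤ ρ ^ n := fun n =>
    (cmeas_mono (Set.iInter_subset _ n)).trans (hmeas n)
  have htend : Filter.Tendsto (fun n => ρ ^ n) Filter.atTop (nhds 0) :=
    ENNReal.tendsto_pow_atTop_nhds_zero_of_lt_one hlt
  exact le_antisymm (ge_of_tendsto' htend hle) (by simp)
end

section
/- Kučera's lemma: Let $U$ be an effectively open (c.e. open) subset of Cantor space of measure less than $1$ that contains all Martin-Löf non-random sequences. Then a sequence $x$ is Martin-Löf non-random if and only if every tail of $x$ belongs to $U$. -/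
open scoped Classical ENNReal

/-! ### Section 1: cylinder basics -/

noncomputable section KuceraAux

namespace KuceraAux

def w (u : List Bool) : ℝ≥0∞ := (2 : ℝ≥0∞)⁻¹ ^ u.length

theorem mem_cyl {x : ℕ → Bool} {u : List Bool} :
    x ∈ cyl u ↔ ∀ i : ℕ, ∀ h : i < u.length, x i = u.get ⟨i, h⟩ := Iff.rfl

theorem cyl_nil : cyl [] = Set.univ := by
  ext x; simp [mem_cyl]

def pad (u : List Bool) : ℕ → Bool := fun i => u.getD i false

theorem pad_mem_cyl (u : List Bool) : pad u ∈ cyl u := by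
  intro i h
  simp [pad, List.getD_eq_getElem, h, List.get_eq_getElem]

theorem cyl_nonempty (u : List Bool) : (cyl u).Nonempty := ⟨pad u, pad_mem_cyl u⟩

theorem cyl_anti {u v : List Bool} (h : u <+: v) : cyl v ⊆ cyl u := by
  intro x hx i hi
  have hlen : i < v.length := lt_of_lt_of_le hi h.length_le
  have := hx i hlen
  simp only [List.get_eq_getElem] at this ⊢
  rw [this, h.getElem hi]

theorem prefix_of_mem_cyl {x : ℕ → Bool} {u v : List Bool} (hu : x ∈ cyl u) (hv : x ∈ cyl v)
    (hlen : u.length ≤ v.length) : u <+: v := by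
  rw [List.prefix_iff_eq_take]
  apply List.ext_get (by simp [hlen])
  intro i h1 h2
  have h1' : i < u.length := by simpa using h1
  have h3 := hu i h1'
  have h2' : i < v.length := lt_of_lt_of_le h1' hlen
  have h4 := hv i h2'
  simp only [List.get_eq_getElem] at h3 h4
  simp only [List.get_eq_getElem, List.getElem_take]
  rw [← h3, ← h4]
  
theorem comparable_of_mem_cyl {x : ℕ → Bool} {u v : List Bool} (hu : x ∈ cyl u)
    (hv : x ∈ cyl v) : u <+: v ∨ v <+: u := by
  rcases le_total u.length v.length with h | h
  · exact Or.inl (prefix_of_mem_cyl hu hv h)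
  · exact Or.inr (prefix_of_mem_cyl hv hu h)

theorem disjoint_cyl_of_incomp {u v : List Bool} (h1 : ¬ u <+: v) (h2 : ¬ v <+: u) :
    Disjoint (cyl u) (cyl v) := by
  rw [Set.disjoint_left]
  intro x hu hv
  rcases comparable_of_mem_cyl hu hv with h | h
  exacts [h1 h, h2 h]

theorem mem_cyl_append {x : ℕ → Bool} {a s : List Bool} :
    x ∈ cyl (a ++ s) ↔ x ∈ cyl a ∧ seqTail x a.length ∈ cyl s := by
  constructor
  · intro h
    refine ⟨fun i hi => ?_, fun i hi => ?_⟩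
    · have hl : i < (a ++ s).length := by simp; omega
      have := h i hl
      simp only [List.get_eq_getElem] at this ⊢
      rw [this, List.getElem_append_left hi]
    · have hl : i + a.length < (a ++ s).length := by simp; omega
      have := h _ hl
      simp only [List.get_eq_getElem] at this ⊢
      rw [seqTail, this]
      rw [List.getElem_append_right (by omega)]
      congr 1
      omega
  · rintro ⟨h1, h2⟩ i hi
    simp only [List.get_eq_getElem]
    rcases lt_or_ge i a.length with h | h
    · rw [List.getElem_append_left h]
      have := h1 i h
      simpa using this
    · rw [List.getElem_append_right h]
      have hi' : i - a.length < s.length := by simp at hi; omega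
      have := h2 _ hi'
      simp only [List.get_eq_getElem, seqTail] at this
      rw [← this]
      congr 1
      omega

theorem seqTail_mem_cyl_drop {x : ℕ → Bool} {z : List Bool} (h : x ∈ cyl z) (k : ℕ) :
    seqTail x k ∈ cyl (z.drop k) := by
  intro i hi
  simp only [List.length_drop] at hi
  have hl2 : k + i < z.length := by omega
  have h2 := h _ hl2
  simp only [List.get_eq_getElem, List.getElem_drop] at h2 ⊢
  show x (i + k) = _
  have hx : x (i + k) = x (k + i) := by rw [Nat.add_comm]
  rw [hx]
  exact h2

theorem seqTail_seqTail (x : ℕ → Bool) (j k : ℕ) :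
    seqTail (seqTail x k) j = seqTail x (j + k) := by
  funext n; simp [seqTail]; congr 1; omega

theorem seqTail_zero (x : ℕ → Bool) : seqTail x 0 = x := rfl

/-! ### Section 2: the measure -/

theorem cmeas_le_of_cover {S : Set (ℕ → Bool)} {c : ℕ → List Bool}
    (h : S ⊆ ⋃ i, cyl (c i)) : cmeas S ≤ ∑' i : ℕ, w (c i) := by
  refine iInf_le_of_le c (iInf_le_of_le h le_rfl)

theorem cmeas_mono {S T : Set (ℕ → Bool)} (h : S ⊆ T) : cmeas S ≤ cmeas T := by
  refine le_iInf fun c => le_iInf fun hc => cmeas_le_of_cover (h.trans hc)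

theorem exists_cover_of_lt {S : Set (ℕ → Bool)} {r : ℝ≥0∞} (h : cmeas S < r) :
    ∃ c : ℕ → List Bool, (S ⊆ ⋃ i, cyl (c i)) ∧ ∑' i : ℕ, w (c i) < r := by
  by_contra hcon
  push_neg at hcon
  have : r ≤ cmeas S := le_iInf fun c => le_iInf fun hc => hcon c hc
  exact absurd h (not_lt.2 this)

theorem tsum_geom_inv_two : ∑' n : ℕ, (2 : ℝ≥0∞)⁻¹ ^ n = 2 := by
  rw [ENNReal.tsum_geometric, ENNReal.one_sub_inv_two, inv_inv]

theorem tsum_junk (N : ℕ) : ∑' n : ℕ, (2 : ℝ≥0∞)⁻¹ ^ (n + N + 1) = 2⁻¹ ^ N := by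
  have h : ∀ n : ℕ, (2 : ℝ≥0∞)⁻¹ ^ (n + N + 1) = 2⁻¹ ^ n * (2⁻¹ ^ N * 2⁻¹) := by
    intro n; rw [pow_add, pow_add, pow_one, mul_assoc]
  rw [tsum_congr h, ENNReal.tsum_mul_right, tsum_geom_inv_two, mul_comm, mul_assoc,
    ENNReal.inv_mul_cancel (by norm_num) (by norm_num), mul_one]

/-- Covering an effectively-presented union of cylinders. -/
theorem cmeas_biUnion_le (S : Set (List Bool)) :
    cmeas (⋃ u ∈ S, cyl u) ≤ ∑' u : S, w u := by
  refine ENNReal.le_of_forall_pos_le_add fun ε hε _ => ?_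
  obtain ⟨N, hN⟩ := ENNReal.exists_inv_two_pow_lt (a := (ε : ℝ≥0∞)) (by exact_mod_cast hε.ne')
  classical
  set e : ℕ → Option (List Bool) := fun n =>
    if h : ∃ u ∈ S, Encodable.encode u = n then some h.choose else none with he
  set c : ℕ → List Bool := fun n =>
    match e n with
    | some u => u
    | none => List.replicate (n + N + 1) false with hc
  have hcov : (⋃ u ∈ S, cyl u) ⊆ ⋃ i, cyl (c i) := by
    intro x hx
    simp only [Set.mem_iUnion] at hx ⊢
    obtain ⟨u, hu, hxu⟩ := hx
    refine ⟨Encodable.encode u, ?_⟩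
    have h : ∃ v ∈ S, Encodable.encode v = Encodable.encode u := ⟨u, hu, rfl⟩
    have : h.choose = u := Encodable.encode_injective h.choose_spec.2
    simp only [hc, he, dif_pos h, this]
    exact hxu
  refine (cmeas_le_of_cover hcov).trans ?_
  have hsplit : ∀ n : ℕ, w (c n) ≤ (e n).elim 0 w + 2⁻¹ ^ (n + N + 1) := by
    intro n
    simp only [hc]
    cases h : e n with
    | some u => simp [h, w]
    | none => simp [h, w]
  refine (ENNReal.tsum_le_tsum hsplit).trans ?_
  rw [ENNReal.tsum_add]
  refine add_le_add ?_ ?_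
  · -- main part equals the tsum over S
    have : ∑' n : ℕ, (e n).elim 0 w = ∑' u : S, w u := by
      refine (Function.Injective.tsum_eq (g := fun u : S => Encodable.encode u.1) ?_ ?_).symm.trans ?_
      · exact fun a b hab => Subtype.ext (Encodable.encode_injective hab)
      · intro n hn
        simp only [Function.mem_support] at hn
        rcases h : e n with _ | u
        · rw [h] at hn; simp at hn
        · simp only [he, dite_eq_iff] at h
          rcases h with ⟨hex, hu⟩ | ⟨_, h2⟩
          · exact ⟨⟨hex.choose, hex.choose_spec.1⟩, hex.choose_spec.2⟩
          · exact absurd h2 (by simp)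
      · refine tsum_congr fun u => ?_
        have h : ∃ v ∈ S, Encodable.encode v = Encodable.encode u.1 := ⟨u.1, u.2, rfl⟩
        have heq : h.choose = u.1 := Encodable.encode_injective h.choose_spec.2
        show (e (Encodable.encode u.1)).elim 0 w = w u.1
        rw [he]
        simp only [dif_pos h]
        rw [Option.elim]
        exact congrArg w heq
    rw [this]
  · rw [tsum_junk]
    exact hN.le
    
/-! ### Lower bound via compactness and counting -/

theorem isClosed_cyl (u : List Bool) : IsClosed (cyl u) := by
  have : cyl u = ⋂ i : Fin u.length, {x : ℕ → Bool | x i = u.get i} := by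
    ext x
    simp only [Set.mem_iInter, mem_cyl, Set.mem_setOf_eq]
    exact ⟨fun h i => h i i.2, fun h i hi => h ⟨i, hi⟩⟩
  rw [this]
  exact isClosed_iInter fun i => isClosed_eq (continuous_apply _) continuous_const

theorem isOpen_cyl (u : List Bool) : IsOpen (cyl u) := by
  have : cyl u = ⋂ i : Fin u.length, (fun x : ℕ → Bool => x i) ⁻¹' {u.get i} := by
    ext x
    simp only [Set.mem_iInter, mem_cyl, Set.mem_preimage, Set.mem_singleton_iff]
    exact ⟨fun h i => h i i.2, fun h i hi => h ⟨i, hi⟩⟩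
  rw [this]
  exact isOpen_iInter_of_finite fun i =>
    (continuous_apply (i : ℕ)).isOpen_preimage _ (isOpen_discrete _)

def extend {L : ℕ} (y : Fin L → Bool) : ℕ → Bool := fun i => if h : i < L then y ⟨i, h⟩ else false

def extP (L : ℕ) (v : List Bool) (y : Fin L → Bool) : Prop :=
  ∀ i : Fin L, ∀ h : (i : ℕ) < v.length, y i = v.get ⟨i, h⟩

def extF (L : ℕ) (v : List Bool) : Finset (Fin L → Bool) :=
  Finset.univ.filter (extP L v)

theorem mem_extF_iff {L : ℕ} {v : List Bool} (hv : v.length ≤ L) (y : Fin L → Bool) :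
    y ∈ extF L v ↔ extend y ∈ cyl v := by
  simp only [extF, Finset.mem_filter, Finset.mem_univ, true_and]
  constructor
  · intro h i hi
    have hiL : i < L := lt_of_lt_of_le hi hv
    have := h ⟨i, hiL⟩ hi
    simpa [extend, hiL] using this
  · intro h i hi
    have := h i hi
    simpa [extend, i.2] using this

def extEquiv (L : ℕ) (v : List Bool) (hv : v.length ≤ L) :
    {y : Fin L → Bool // extP L v y} ≃ (Fin (L - v.length) → Bool) where
  toFun y j := y.1 ⟨v.length + j, by omega⟩
  invFun z := ⟨fun i => if h : (i : ℕ) < v.length then v.get ⟨i, h⟩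
      else z ⟨i - v.length, by omega⟩, fun i h => by simp [h]⟩
  left_inv y := by
    ext i
    by_cases h : (i : ℕ) < v.length
    · simp only [dif_pos h]
      exact (y.2 i h).symm
    · simp only [dif_neg h]
      refine congrArg _ (Fin.ext ?_)
      simp
      omega
  right_inv z := by
    funext j
    simp only []
    rw [dif_neg (by omega)]
    refine congrArg _ (Fin.ext ?_)
    simp

theorem card_extF (L : ℕ) (v : List Bool) (hv : v.length ≤ L) :
    (extF L v).card = 2 ^ (L - v.length) := by
  have h1 : (extF L v).card = Fintype.card {y : Fin L → Bool // extP L v y} :=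
    (Fintype.card_subtype _).symm
  rw [h1, Fintype.card_congr (extEquiv L v hv)]
  simp [Fintype.card_fun]

theorem pow_weight {a b : ℕ} (h : a ≤ b) :
    ((2 : ℝ≥0∞) ^ (b - a)) * 2⁻¹ ^ b = 2⁻¹ ^ a := by
  have : (2 : ℝ≥0∞)⁻¹ ^ b = 2⁻¹ ^ (b - a) * 2⁻¹ ^ a := by
    rw [← pow_add]
    congr 1
    omega
  rw [this, ← mul_assoc, ← mul_pow, ENNReal.mul_inv_cancel (by norm_num) (by norm_num),
    one_pow, one_mul]

theorem finite_antichain_le_cover (F : Finset (List Bool))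
    (hF : ∀ u ∈ F, ∀ v ∈ F, u <+: v → u = v)
    (c : ℕ → List Bool) (hc : (⋃ u ∈ F, cyl u) ⊆ ⋃ i, cyl (c i)) :
    ∑ u ∈ F, w u ≤ ∑' i : ℕ, w (c i) := by
  classical
  -- compactness
  have hK : IsCompact (⋃ u ∈ F, cyl u) := F.isCompact_biUnion fun u _ =>
    (isClosed_cyl u).isCompact
  obtain ⟨t, ht⟩ := hK.elim_finite_subcover (fun i => cyl (c i)) (fun i => isOpen_cyl _) hc
  set L : ℕ := (F.sup List.length) ⊔ (t.sup fun i => (c i).length) with hL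
  have hFL : ∀ u ∈ F, u.length ≤ L := fun u hu =>
    le_sup_of_le_left (Finset.le_sup hu)
  have htL : ∀ i ∈ t, (c i).length ≤ L := fun i hi =>
    le_sup_of_le_right (Finset.le_sup (f := fun i => (c i).length) hi)
  -- covering of finite extensions
  have hcov : F.biUnion (extF L) ⊆ t.biUnion (fun i => extF L (c i)) := by
    intro y hy
    simp only [Finset.mem_biUnion] at hy ⊢
    obtain ⟨u, hu, hyu⟩ := hy
    have hx : extend y ∈ cyl u := (mem_extF_iff (hFL u hu) y).1 hyu
    have : extend y ∈ ⋃ i ∈ t, cyl (c i) := ht (Set.mem_biUnion hu hx)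
    simp only [Set.mem_iUnion] at this
    obtain ⟨i, hi, hxi⟩ := this
    exact ⟨i, hi, (mem_extF_iff (htL i hi) y).2 hxi⟩
  -- disjointness
  have hdisj : ∀ u ∈ F, ∀ v ∈ F, u ≠ v → Disjoint (extF L u) (extF L v) := by
    intro u hu v hv huv
    rw [Finset.disjoint_left]
    intro y hyu hyv
    have hxu : extend y ∈ cyl u := (mem_extF_iff (hFL u hu) y).1 hyu
    have hxv : extend y ∈ cyl v := (mem_extF_iff (hFL v hv) y).1 hyv
    rcases comparable_of_mem_cyl hxu hxv with h | h
    · exact huv (hF u hu v hv h)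
    · exact huv ((hF v hv u hu h).symm)
  -- counting
  have hcount : ∑ u ∈ F, 2 ^ (L - u.length) ≤ ∑ i ∈ t, 2 ^ (L - (c i).length) := by
    calc ∑ u ∈ F, 2 ^ (L - u.length) = ∑ u ∈ F, (extF L u).card := by
          refine Finset.sum_congr rfl fun u hu => (card_extF L u (hFL u hu)).symm
      _ = (F.biUnion (extF L)).card := (Finset.card_biUnion hdisj).symm
      _ ≤ (t.biUnion fun i => extF L (c i)).card := Finset.card_le_card hcov
      _ ≤ ∑ i ∈ t, (extF L (c i)).card := Finset.card_biUnion_le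
      _ = ∑ i ∈ t, 2 ^ (L - (c i).length) := by
          refine Finset.sum_congr rfl fun i hi => card_extF L (c i) (htL i hi)
  -- convert to weights
  have key : ∑ u ∈ F, w u ≤ ∑ i ∈ t, w (c i) := by
    have h1 : ∑ u ∈ F, w u = (∑ u ∈ F, (2 : ℝ≥0∞) ^ (L - u.length)) * 2⁻¹ ^ L := by
      rw [Finset.sum_mul]
      refine Finset.sum_congr rfl fun u hu => ?_
      rw [pow_weight (hFL u hu)]
      rfl
    have h2 : ∑ i ∈ t, w (c i) = (∑ i ∈ t, (2 : ℝ≥0∞) ^ (L - (c i).length)) * 2⁻¹ ^ L := by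
      rw [Finset.sum_mul]
      refine Finset.sum_congr rfl fun i hi => ?_
      rw [pow_weight (htL i hi)]
      rfl
    rw [h1, h2]
    refine mul_le_mul_left ?_ _
    calc (∑ u ∈ F, (2 : ℝ≥0∞) ^ (L - u.length))
        = ((∑ u ∈ F, 2 ^ (L - u.length) : ℕ) : ℝ≥0∞) := by push_cast; ring
      _ ≤ ((∑ i ∈ t, 2 ^ (L - (c i).length) : ℕ) : ℝ≥0∞) := by exact_mod_cast hcount
      _ = ∑ i ∈ t, (2 : ℝ≥0∞) ^ (L - (c i).length) := by push_cast; ring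
  exact key.trans (ENNReal.sum_le_tsum t)

theorem tsum_antichain_le (A : Set (List Bool)) (hA : ∀ u ∈ A, ∀ v ∈ A, u <+: v → u = v) :
    ∑' u : A, w u ≤ cmeas (⋃ u ∈ A, cyl u) := by
  refine le_iInf fun c => le_iInf fun hc => ?_
  rw [ENNReal.tsum_eq_iSup_sum]
  refine iSup_le fun s => ?_
  classical
  have himg : ∑ a ∈ s, w a.1 = ∑ u ∈ s.image Subtype.val, w u :=
    (Finset.sum_image (fun a _ b _ h => Subtype.ext h)).symm
  rw [himg]
  refine finite_antichain_le_cover _ ?_ c ?_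
  · intro u hu v hv hpre
    simp only [Finset.mem_image] at hu hv
    obtain ⟨⟨u', hu'⟩, _, rfl⟩ := hu
    obtain ⟨⟨v', hv'⟩, _, rfl⟩ := hv
    exact hA _ hu' _ hv' hpre
  · refine Set.Subset.trans ?_ hc
    intro x hx
    simp only [Set.mem_iUnion] at hx ⊢
    obtain ⟨u, hu, hxu⟩ := hx
    simp only [Finset.coe_image, Finset.mem_coe, Finset.mem_image] at hu
    obtain ⟨⟨u', hu'⟩, _, rfl⟩ := hu
    exact ⟨u', hu', hxu⟩

/-! ### Computability master lemmas -/

theorem replicate_trivmap (n : ℕ) : (List.range n).map triv = List.replicate n false := by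
  have : triv = Function.const ℕ false := rfl
  rw [this, List.map_const, List.length_range]

theorem primrec_replicate_false : Primrec fun n : ℕ => List.replicate n false := by
  have h : Primrec fun n : ℕ => (List.range n).map (fun _ : ℕ => false) :=
    Primrec.list_map Primrec.list_range (Primrec.const false).to₂
  refine h.of_eq fun n => ?_
  have : (fun _ : ℕ => false) = Function.const ℕ false := rfl
  rw [this, List.map_const, List.length_range]

/-- Σ₁ extraction from `PartrecIn triv`. -/
theorem sigma1_of_partrecIn {α β : Type} [Primcodable α] [Primcodable β] {f : α →. β}
    (h : PartrecIn triv f) :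
    ∃ D : α → ℕ → Bool, Primrec₂ D ∧ ∀ a, ((f a).Dom ↔ ∃ m, D a m = true) := by
  obtain ⟨F, hF, h1, h2⟩ := h
  have hnat : Nat.Partrec fun n =>
      Part.bind ↑(Encodable.decode (α := α × List Bool) n) fun z => (F z).map Encodable.encode :=
    hF
  obtain ⟨cd, hcd⟩ := Nat.Partrec.Code.exists_code.1 hnat
  refine ⟨fun a m => (Nat.Partrec.Code.evaln m.unpair.1 cd
      (Encodable.encode (a, List.replicate m.unpair.2 false))).isSome, ?_, ?_⟩
  · have hin : Primrec fun p : α × ℕ =>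
        Encodable.encode (p.1, List.replicate p.2.unpair.2 false) :=
      Primrec.encode.comp (Primrec.pair Primrec.fst
        (primrec_replicate_false.comp
          (Primrec.snd.comp (Primrec.unpair.comp Primrec.snd))))
    have hev : Primrec fun p : α × ℕ =>
        Nat.Partrec.Code.evaln p.2.unpair.1 cd
          (Encodable.encode (p.1, List.replicate p.2.unpair.2 false)) :=
      Nat.Partrec.Code.primrec_evaln.comp
        (Primrec.pair (Primrec.pair (Primrec.fst.comp (Primrec.unpair.comp Primrec.snd))
          (Primrec.const cd)) hin)
    exact Primrec.option_isSome.comp hev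
  · intro a
    constructor
    · intro hdom
      obtain ⟨b, hb⟩ := Part.dom_iff_mem.1 hdom
      obtain ⟨n, hbF⟩ := h2 a b hb
      rw [replicate_trivmap] at hbF
      set z : α × List Bool := (a, List.replicate n false) with hz
      have hmem : Encodable.encode b ∈ Nat.Partrec.Code.eval cd (Encodable.encode z) := by
        rw [hcd]
        have hdec : (Encodable.decode (Encodable.encode z) : Option (α × List Bool)) = some z :=
          Encodable.encodek z
        simp only [hdec, Part.coe_some, Part.bind_eq_bind, Part.bind_some]
        exact Part.mem_map _ hbF
      obtain ⟨s, hs⟩ := Nat.Partrec.Code.evaln_complete.1 hmem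
      refine ⟨Nat.pair s n, ?_⟩
      show (Nat.Partrec.Code.evaln (Nat.pair s n).unpair.1 cd
        (Encodable.encode (a, List.replicate (Nat.pair s n).unpair.2 false))).isSome = true
      rw [Nat.unpair_pair]
      exact Option.isSome_iff_exists.2 ⟨_, hs⟩
    · rintro ⟨m, hm⟩
      obtain ⟨y, hy⟩ := Option.isSome_iff_exists.1 hm
      have hy' : y ∈ Nat.Partrec.Code.eval cd
          (Encodable.encode (a, List.replicate m.unpair.2 false)) :=
        Nat.Partrec.Code.evaln_sound hy
      rw [hcd] at hy'
      set z : α × List Bool := (a, List.replicate m.unpair.2 false) with hz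
      have hdec : (Encodable.decode (Encodable.encode z) : Option (α × List Bool)) = some z :=
        Encodable.encodek z
      simp only [hdec, Part.coe_some, Part.bind_eq_bind, Part.bind_some] at hy'
      obtain ⟨b, hbF, _⟩ := (Part.mem_map_iff _).1 hy'
      have := h1 a m.unpair.2 b (by rwa [replicate_trivmap])
      rw [this]
      trivial

/-- Building a c.e. predicate from a primitive recursive one. -/
def fromPred {α : Type} (P : α → ℕ → Bool) : α →. Unit :=
  fun a => Nat.rfindOpt fun n => if P a n then some () else none

theorem fromPred_partrec {α : Type} [Primcodable α] {P : α → ℕ → Bool} (hP : Primrec₂ P) :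
    Partrec (fromPred P) := by
  refine Partrec.rfindOpt ?_
  have h2 : Computable₂ fun (a : α) (n : ℕ) => bif P a n then some () else (none : Option Unit) :=
    Computable.cond hP.to_comp (Computable.const (some ())) (Computable.const none)
  refine h2.of_eq fun p => ?_
  cases h : P p.1 p.2 <;> simp [h]

theorem fromPred_dom {α : Type} (P : α → ℕ → Bool) (a : α) :
    (fromPred P a).Dom ↔ ∃ n, P a n = true := by
  rw [fromPred, Nat.rfindOpt_dom]
  constructor
  · rintro ⟨n, b, hb⟩
    refine ⟨n, ?_⟩
    by_contra h
    simp [h] at hb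
  · rintro ⟨n, hn⟩
    exact ⟨n, (), by simp [hn]⟩

theorem partrecIn_of_partrec {α β : Type} [Primcodable α] [Primcodable β] {O : ℕ → Bool}
    {f : α →. β} (h : Partrec f) : PartrecIn O f := by
  refine ⟨fun p => f p.1, h.comp Computable.fst, ?_, ?_⟩
  · intro a n b hb
    exact Part.eq_some_iff.2 hb
  · intro a b hb
    exact ⟨0, hb⟩

/-! ### Forward direction: tails of non-random sequences are non-random -/

def allB : ℕ → List (List Bool)
  | 0 => [[]]
  | k + 1 => (allB k).flatMap fun u => [u ++ [false], u ++ [true]]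

theorem mem_allB {k : ℕ} {u : List Bool} : u ∈ allB k ↔ u.length = k := by
  induction k generalizing u with
  | zero => simp [allB, List.length_eq_zero_iff]
  | succ k ih =>
    simp only [allB, List.mem_flatMap, List.mem_cons, List.mem_singleton]
    constructor
    · rintro ⟨v, hv, rfl | rfl | h⟩ <;> simp_all
    · intro hu
      have hne : u ≠ [] := by rintro rfl; simp at hu
      refine ⟨u.dropLast, ih.2 (by simp [hu]), ?_⟩
      rcases hb : u.getLast hne with _ | _
      · left; rw [← hb]; exact (List.dropLast_append_getLast hne).symm
      · right; left; rw [← hb]; exact (List.dropLast_append_getLast hne).symm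

def allLt (k : ℕ) : List (List Bool) := (List.range k).flatMap allB

theorem mem_allLt {k : ℕ} {u : List Bool} : u ∈ allLt k ↔ u.length < k := by
  simp only [allLt, List.mem_flatMap, List.mem_range]
  constructor
  · rintro ⟨j, hj, hu⟩; rwa [mem_allB.1 hu]
  · intro h; exact ⟨u.length, h, mem_allB.2 rfl⟩

theorem list_any_primrec {α γ : Type} [Primcodable α] (L : List γ) (Q : γ → α → Bool)
    (h : ∀ w ∈ L, Primrec (Q w)) : Primrec fun x => L.any fun w => Q w x := by
  induction L with
  | nil => simpa using Primrec.const false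
  | cons a L ih =>
    have h2 : Primrec fun x => cond (Q a x) true (L.any fun w => Q w x) :=
      Primrec.cond (h a List.mem_cons_self) (Primrec.const true)
        (ih fun w hw => h w (List.mem_cons_of_mem a hw))
    refine h2.of_eq fun x => ?_
    cases hq : Q a x <;> simp [hq]

theorem w_drop_le (k : ℕ) (z : List Bool) : w (z.drop k) ≤ 2 ^ k * w z := by
  rcases le_total k z.length with h | h
  · have : w (z.drop k) = 2 ^ k * w z := by
      rw [w, w, List.length_drop]
      rw [show (2:ℝ≥0∞)^k = 2^(z.length - (z.length - k)) by congr 1; omega]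
      exact (pow_weight (by omega)).symm
    exact this.le
  · rw [List.drop_eq_nil_of_le h]
    have h1 : w ([] : List Bool) = 1 := by simp [w]
    rw [h1]
    calc (1:ℝ≥0∞) = 2 ^ z.length * 2⁻¹ ^ z.length := by
          rw [← mul_pow, ENNReal.mul_inv_cancel (by norm_num) (by norm_num), one_pow]
      _ ≤ 2 ^ k * w z := by
          rw [w]
          exact mul_le_mul_left (pow_le_pow_right₀ (by norm_num) h) _

theorem nonrandom_tail {x : ℕ → Bool} (h : ¬ MLRandomIn triv x) (k : ℕ) :
    ¬ MLRandomIn triv (seqTail x k) := by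
  rw [MLRandomIn] at h
  push_neg at h
  obtain ⟨W, htest, hxmem⟩ := h
  obtain ⟨⟨f1, hf1, hgen⟩, hmeasW⟩ := htest
  obtain ⟨D, hD, hDdom⟩ := sigma1_of_partrecIn hf1
  set P : (ℕ × List Bool) → ℕ → Bool := fun p s =>
    cond ((allB k).any fun wd => D (p.1 + k, wd ++ p.2) s) true
      (cond (decide (p.2 = [])) ((allLt k).any fun v => D (p.1 + k, v) s) false) with hP
  have hPrim : Primrec₂ P := by
    have hA : Primrec fun q : (ℕ × List Bool) × ℕ =>
        (allB k).any fun wd => D (q.1.1 + k, wd ++ q.1.2) q.2 := by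
      refine list_any_primrec _ _ fun wd _ => ?_
      exact hD.comp
        (Primrec.pair (Primrec.nat_add.comp (Primrec.fst.comp Primrec.fst) (Primrec.const k))
          (Primrec.list_append.comp (Primrec.const wd) (Primrec.snd.comp Primrec.fst)))
        Primrec.snd
    have hB : Primrec fun q : (ℕ × List Bool) × ℕ =>
        (allLt k).any fun v => D (q.1.1 + k, v) q.2 := by
      refine list_any_primrec _ _ fun v _ => ?_
      exact hD.comp
        (Primrec.pair (Primrec.nat_add.comp (Primrec.fst.comp Primrec.fst) (Primrec.const k))
          (Primrec.const v)) Primrec.snd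
    have hE : Primrec fun q : (ℕ × List Bool) × ℕ => decide (q.1.2 = []) :=
      (Primrec.eq.comp (Primrec.snd.comp Primrec.fst) (Primrec.const [])).decide
    exact Primrec.cond hA (Primrec.const true) (Primrec.cond hE hB (Primrec.const false))
  -- characterization of the domain
  have hch : ∀ n u, (fromPred P (n, u)).Dom ↔
      ∃ v : List Bool, (f1 (n + k, v)).Dom ∧ v.drop k = u := by
    intro n u
    rw [fromPred_dom]
    constructor
    · rintro ⟨s, hs⟩
      rw [hP] at hs
      simp only [Bool.cond_eq_ite] at hs
      split_ifs at hs with h1 h2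
      · simp only [List.any_eq_true] at h1
        obtain ⟨wd, hwd, hDs⟩ := h1
        refine ⟨wd ++ u, (hDdom _).2 ⟨s, hDs⟩, ?_⟩
        rw [List.drop_append_of_le_length (le_of_eq (mem_allB.1 hwd).symm)]
        simp [mem_allB.1 hwd]
      · simp only [List.any_eq_true] at hs
        obtain ⟨v, hv, hDs⟩ := hs
        refine ⟨v, (hDdom _).2 ⟨s, hDs⟩, ?_⟩
        rw [List.drop_eq_nil_of_le (le_of_lt (mem_allLt.1 hv))]
        simp at h2
        exact h2.symm
    · rintro ⟨v, hv, rfl⟩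
      obtain ⟨s, hs⟩ := (hDdom _).1 hv
      rcases le_or_gt k v.length with hlen | hlen
      · refine ⟨s, ?_⟩
        rw [hP]
        have hmem : v.take k ∈ allB k := mem_allB.2 (by simp [hlen])
        have : (allB k).any (fun wd => D (n + k, wd ++ v.drop k) s) = true := by
          rw [List.any_eq_true]
          exact ⟨v.take k, hmem, by rwa [List.take_append_drop]⟩
        simp [this]
      · refine ⟨s, ?_⟩
        rw [hP]
        have hnil : v.drop k = [] := List.drop_eq_nil_of_le (le_of_lt hlen)
        have hmem : v ∈ allLt k := mem_allLt.2 hlen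
        have h2 : (allLt k).any (fun v' => D (n + k, v') s) = true := by
          rw [List.any_eq_true]; exact ⟨v, hmem, hs⟩
        have h3 : decide (List.drop k v = []) = true := by simp [hnil]
        cases h1 : (allB k).any fun wd => D (n + k, wd ++ List.drop k v) s <;>
          simp [h1, h3, h2] <;> omega
  set T : ℕ → Set (ℕ → Bool) := fun n => ⋃ u ∈ {u | (fromPred P (n, u)).Dom}, cyl u with hT
  have hTtest : MLTestIn triv T := by
    constructor
    · exact ⟨fromPred P, partrecIn_of_partrec (fromPred_partrec hPrim), fun n => rfl⟩
    · intro n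
      refine ENNReal.le_of_forall_pos_le_add fun ε hε _ => ?_
      have hδ : (0:ℝ≥0∞) < 2⁻¹ ^ k * ε := by
        exact ENNReal.mul_pos (pow_ne_zero k (by norm_num)) (by exact_mod_cast hε.ne')
      have hlt : cmeas (W (n + k)) < 2⁻¹ ^ (n + k) + 2⁻¹ ^ k * ε :=
        lt_of_le_of_lt (hmeasW (n + k)) (ENNReal.lt_add_right (by simp) hδ.ne')
      obtain ⟨c, hcov, hsum⟩ := exists_cover_of_lt hlt
      have hTcov : T n ⊆ ⋃ i, cyl ((c i).drop k) := by
        intro y hy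
        simp only [hT, Set.mem_iUnion, Set.mem_setOf_eq] at hy
        obtain ⟨u, hu, hyu⟩ := hy
        obtain ⟨v, hvdom, rfl⟩ := (hch n u).1 hu
        -- reconstruct a point of cyl v
        set x' : ℕ → Bool := fun i => if h : i < k then v.getD i false else y (i - k) with hx'
        have hx'v : x' ∈ cyl v := by
          intro i hi
          simp only [hx']
          split_ifs with hik
          · simp [List.getD_eq_getElem, hi, List.get_eq_getElem]
          · have := hyu (i - k) (by simp [List.length_drop]; omega)
            simp only [List.get_eq_getElem, List.getElem_drop] at this ⊢
            rw [this]
            congr 1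
            omega
        have hx'W : x' ∈ W (n + k) := by
          rw [hgen (n + k)]
          exact Set.mem_biUnion hvdom hx'v
        obtain ⟨i, hi⟩ := Set.mem_iUnion.1 (hcov hx'W)
        refine Set.mem_iUnion.2 ⟨i, ?_⟩
        have h2 : seqTail x' k ∈ cyl ((c i).drop k) := seqTail_mem_cyl_drop hi k
        have h3 : seqTail x' k = y := by
          funext j
          simp [seqTail, hx']
        rwa [h3] at h2
      refine (cmeas_le_of_cover hTcov).trans ?_
      calc ∑' i : ℕ, w ((c i).drop k) ≤ ∑' i : ℕ, 2 ^ k * w (c i) :=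
            ENNReal.tsum_le_tsum fun i => w_drop_le k (c i)
        _ = 2 ^ k * ∑' i : ℕ, w (c i) := ENNReal.tsum_mul_left
        _ ≤ 2 ^ k * (2⁻¹ ^ (n + k) + 2⁻¹ ^ k * ε) := mul_le_mul_right hsum.le _
        _ = 2⁻¹ ^ n + ε := by
            have e1 : (2:ℝ≥0∞) ^ k * 2⁻¹ ^ (n + k) = 2⁻¹ ^ n := by
              rw [pow_add, mul_comm ((2:ℝ≥0∞)⁻¹ ^ n), ← mul_assoc, ← mul_pow,
                ENNReal.mul_inv_cancel (by norm_num) (by norm_num), one_pow, one_mul]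
            have e2 : (2:ℝ≥0∞) ^ k * 2⁻¹ ^ k = 1 := by
              rw [← mul_pow, ENNReal.mul_inv_cancel (by norm_num) (by norm_num), one_pow]
            rw [mul_add, e1, ← mul_assoc, e2, one_mul]
  have hxT : seqTail x k ∈ ⋂ n, T n := by
    refine Set.mem_iInter.2 fun n => ?_
    have hx : x ∈ W (n + k) := Set.mem_iInter.1 hxmem (n + k)
    rw [hgen (n + k)] at hx
    simp only [Set.mem_iUnion, Set.mem_setOf_eq] at hx
    obtain ⟨v, hvdom, hxv⟩ := hx
    have hu : (fromPred P (n, v.drop k)).Dom := (hch n _).2 ⟨v, hvdom, rfl⟩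
    exact Set.mem_biUnion hu (seqTail_mem_cyl_drop hxv k)
  intro hrand
  exact hrand T hTtest hxT

/-! ### Backward direction: cylinder subtraction -/

def takeD (n : ℕ) (v : List Bool) : List Bool :=
  (List.range n).map fun i => v.getD i false

theorem takeD_eq {n : ℕ} {v : List Bool} (h : n ≤ v.length) : takeD n v = v.take n := by
  refine List.ext_getElem (by simp [takeD]; omega) fun i h1 h2 => ?_
  simp only [takeD, List.length_map, List.length_range] at h1
  simp [takeD, List.getD_eq_getElem, lt_of_lt_of_le h1 h, List.getElem_take]

def prefixB (u v : List Bool) : Bool :=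
  decide (u.length ≤ v.length) && decide (u = takeD u.length v)

theorem prefixB_iff {u v : List Bool} : prefixB u v = true ↔ u <+: v := by
  rw [prefixB, Bool.and_eq_true, decide_eq_true_eq, decide_eq_true_eq]
  constructor
  · rintro ⟨h1, h2⟩
    rw [List.prefix_iff_eq_take, ← takeD_eq h1]
    exact h2
  · intro h
    refine ⟨h.length_le, ?_⟩
    rw [takeD_eq h.length_le, ← List.prefix_iff_eq_take]
    exact h

def tstr (u v : List Bool) (i : ℕ) : List Bool :=
  takeD (u.length + i) v ++ [!(v.getD (u.length + i) false)]

def minus (u v : List Bool) : List (List Bool) :=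
  if prefixB v u then []
  else if prefixB u v then (List.range (v.length - u.length)).map (tstr u v)
  else [u]

def region (L : List (List Bool)) : Set (ℕ → Bool) := ⋃ p ∈ L, cyl p

theorem mem_cyl_take {x : ℕ → Bool} {v : List Bool} {m : ℕ} (hm : m ≤ v.length) :
    x ∈ cyl (v.take m) ↔ ∀ j, (hj : j < m) → x j = v[j]'(lt_of_lt_of_le hj hm) := by
  constructor
  · intro h j hj
    have := h j (by simp; omega)
    simpa [List.get_eq_getElem, List.getElem_take] using this
  · intro h j hj
    simp only [List.length_take] at hj
    have hj' : j < m := lt_of_lt_of_le hj (min_le_left _ _)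
    simp only [List.get_eq_getElem, List.getElem_take]
    exact h j hj'

theorem mem_cyl_single {x : ℕ → Bool} {b : Bool} : x ∈ cyl [b] ↔ x 0 = b := by
  constructor
  · intro h; simpa using h 0 (by simp)
  · intro h i hi
    simp only [List.length_singleton] at hi
    have h0 : i = 0 := by omega
    subst h0
    simpa using h

theorem mem_cyl_tstr {x : ℕ → Bool} {u v : List Bool} {i : ℕ}
    (hi : i < v.length - u.length) (hlen : u.length < v.length) :
    x ∈ cyl (tstr u v i) ↔
      ((∀ j, (hj : j < u.length + i) → x j = v[j]'(by omega)) ∧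
        x (u.length + i) = !(v[u.length + i]'(by omega))) := by
  have hb : u.length + i ≤ v.length := by omega
  have hbb : u.length + i < v.length := by omega
  rw [tstr, takeD_eq hb, mem_cyl_append]
  have hl : (v.take (u.length + i)).length = u.length + i := by simp; omega
  rw [hl, mem_cyl_take hb]
  constructor
  · rintro ⟨h1, h2⟩
    refine ⟨h1, ?_⟩
    have := mem_cyl_single.1 h2
    simp only [seqTail, Nat.zero_add] at this
    rw [this, List.getD_eq_getElem _ _ hbb]
  · rintro ⟨h1, h2⟩
    refine ⟨h1, mem_cyl_single.2 ?_⟩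
    simp only [seqTail, Nat.zero_add]
    rw [h2, List.getD_eq_getElem _ _ hbb]

theorem region_minus (u v : List Bool) : region (minus u v) = cyl u \ cyl v := by
  rw [minus]
  split_ifs with h1 h2
  · rw [prefixB_iff] at h1
    have : cyl u ⊆ cyl v := cyl_anti h1
    simp only [region, List.not_mem_nil, Set.iUnion_of_empty, Set.iUnion_empty]
    rw [Set.diff_eq_empty.2 this]
  · rw [prefixB_iff] at h2
    rw [prefixB_iff] at h1  -- h1 : ¬ v <+: u
    have hlen : u.length < v.length := by
      rcases lt_or_eq_of_le h2.length_le with h | h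
      · exact h
      · exact absurd (List.prefix_of_prefix_length_le (List.prefix_refl v) h2 (le_of_eq h.symm)) h1
    ext x
    simp only [region, Set.mem_iUnion, List.mem_map, List.mem_range, Set.mem_diff]
    constructor
    · rintro ⟨p, ⟨i, hi, rfl⟩, hx⟩
      rw [mem_cyl_tstr hi hlen] at hx
      obtain ⟨hx1, hx2⟩ := hx
      constructor
      · intro j hj
        have hj' : j < u.length := hj
        have := hx1 j (by omega)
        simp only [List.get_eq_getElem]
        rw [this, h2.getElem hj]
      · intro hxv
        have := hxv (u.length + i) (by omega)
        simp only [List.get_eq_getElem] at this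
        rw [this] at hx2
        exact absurd hx2 (by simp)
    · rintro ⟨hxu, hxv⟩
      have hex : ∃ j, ∃ _ : j < v.length, x j ≠ v[j] := by
        by_contra hcon
        push_neg at hcon
        exact hxv fun j hj => by
          simp only [List.get_eq_getElem]
          exact hcon j hj
      classical
      set j0 := Nat.find hex with hj0
      obtain ⟨hj0v, hj0ne⟩ := Nat.find_spec hex
      have hj0u : u.length ≤ j0 := by
        by_contra hc
        push_neg at hc
        have := hxu j0 hc
        simp only [List.get_eq_getElem] at this
        rw [h2.getElem hc] at this
        exact hj0ne this
      refine ⟨tstr u v (j0 - u.length), ⟨j0 - u.length, by omega, rfl⟩, ?_⟩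
      rw [mem_cyl_tstr (by omega) hlen]
      have he : u.length + (j0 - u.length) = j0 := by omega
      constructor
      · intro j hj
        rw [he] at hj
        by_contra hc
        exact absurd (Nat.find_min hex hj ⟨by omega, by
          convert hc using 2 <;> omega⟩) (by simp)
      · have hx : x j0 = !(v[j0]'(by omega)) := by
          revert hj0ne
          generalize (v[j0]'(by omega)) = b
          cases hxx : x j0 <;> cases b <;> simp
        convert hx using 3 <;> omega
  · ext x
    simp only [region, List.mem_singleton, Set.mem_diff]
    rw [prefixB_iff] at h1 h2
    have hdisj : Disjoint (cyl u) (cyl v) := disjoint_cyl_of_incomp h2 h1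
    constructor
    · intro hx
      simp only [Set.mem_iUnion] at hx
      obtain ⟨p, rfl, hp⟩ := hx
      exact ⟨hp, fun hv => Set.disjoint_left.1 hdisj hp hv⟩
    · rintro ⟨hx, -⟩
      exact Set.mem_biUnion rfl hx

theorem minus_subset {u v p : List Bool} (hp : p ∈ minus u v) : cyl p ⊆ cyl u := by
  have : cyl p ⊆ region (minus u v) := fun x hx => Set.mem_biUnion hp hx
  rw [region_minus] at this
  exact this.trans Set.diff_subset

theorem minus_pairwise {u v p q : List Bool} (hp : p ∈ minus u v) (hq : q ∈ minus u v)
    (hne : p ≠ q) : Disjoint (cyl p) (cyl q) := by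
  rw [minus] at hp hq
  split_ifs at hp hq with h1 h2
  · simp at hp
  · simp only [List.mem_map, List.mem_range] at hp hq
    rw [prefixB_iff] at h2
    rw [prefixB_iff] at h1
    have hlen : u.length < v.length := by
      rcases lt_or_eq_of_le h2.length_le with h | h
      · exact h
      · exact absurd (List.prefix_of_prefix_length_le (List.prefix_refl v) h2 (le_of_eq h.symm)) h1
    obtain ⟨i, hi, rfl⟩ := hp
    obtain ⟨j, hj, rfl⟩ := hq
    have hij : i ≠ j := fun h => hne (by rw [h])
    -- wlog i < j
    have key : ∀ i j, i < j → j < v.length - u.length →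
        Disjoint (cyl (tstr u v i)) (cyl (tstr u v j)) := by
      intro i j hij hj
      rw [Set.disjoint_left]
      intro x hxi hxj
      rw [mem_cyl_tstr (by omega) hlen] at hxi hxj
      have h1' := hxj.1 (u.length + i) (by omega)
      have h2' := hxi.2
      rw [h1'] at h2'
      exact absurd h2' (by simp)
    rcases lt_or_gt_of_ne hij with h | h
    · exact key i j h hj
    · exact (key j i h hi).symm
  · simp only [List.mem_singleton] at hp hq
    exact absurd (hp.trans hq.symm) hne

/-! ### The antichain construction -/

def sub1 (ps : List (List Bool)) (v : List Bool) : List (List Bool) :=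
  ps.flatMap fun p => minus p v

def subAll (u : List Bool) (V : List (List Bool)) : List (List Bool) :=
  V.foldl sub1 [u]

theorem region_sub1 (ps : List (List Bool)) (v : List Bool) :
    region (sub1 ps v) = region ps \ cyl v := by
  ext x
  simp only [region, sub1, Set.mem_iUnion, List.mem_flatMap, Set.mem_diff]
  constructor
  · rintro ⟨q, ⟨p, hp, hq⟩, hx⟩
    have : x ∈ region (minus p v) := Set.mem_biUnion hq hx
    rw [region_minus] at this
    exact ⟨⟨p, hp, this.1⟩, this.2⟩
  · rintro ⟨⟨p, hp, hx⟩, hxv⟩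
    have : x ∈ region (minus p v) := by rw [region_minus]; exact ⟨hx, hxv⟩
    simp only [region, Set.mem_iUnion] at this
    obtain ⟨q, hq, hxq⟩ := this
    exact ⟨q, ⟨p, hp, hq⟩, hxq⟩

theorem region_foldl (V : List (List Bool)) (ps : List (List Bool)) :
    region (V.foldl sub1 ps) = region ps \ region V := by
  induction V generalizing ps with
  | nil => simp [region]
  | cons v V ih =>
    rw [List.foldl_cons, ih, region_sub1]
    have : region (v :: V) = cyl v ∪ region V := by
      simp [region, Set.biUnion_insert]
    rw [this, Set.diff_diff]

theorem region_subAll (u : List Bool) (V : List (List Bool)) :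
    region (subAll u V) = cyl u \ region V := by
  rw [subAll, region_foldl]
  congr 1
  simp [region]

/-- disjointness invariant -/
def DP (ps : List (List Bool)) : Prop :=
  ∀ p ∈ ps, ∀ q ∈ ps, p ≠ q → Disjoint (cyl p) (cyl q)

theorem DP_sub1 {ps : List (List Bool)} (h : DP ps) (v : List Bool) : DP (sub1 ps v) := by
  intro p' hp' q' hq' hne
  simp only [sub1, List.mem_flatMap] at hp' hq'
  obtain ⟨p, hp, hp'⟩ := hp'
  obtain ⟨q, hq, hq'⟩ := hq'
  by_cases hpq : p = q
  · subst hpq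
    exact minus_pairwise hp' hq' hne
  · exact ((h p hp q hq hpq).mono (minus_subset hp') (minus_subset hq'))

theorem DP_foldl {ps : List (List Bool)} (h : DP ps) (V : List (List Bool)) :
    DP (V.foldl sub1 ps) := by
  induction V generalizing ps with
  | nil => exact h
  | cons v V ih => exact ih (DP_sub1 h v)

theorem DP_subAll (u : List Bool) (V : List (List Bool)) : DP (subAll u V) := by
  refine DP_foldl ?_ V
  intro p hp q hq hne
  simp only [List.mem_singleton] at hp hq
  exact absurd (hp.trans hq.symm) hne

section Acc

variable (g : ℕ → Option (List Bool))

def acc : ℕ → List (List Bool)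
  | 0 => []
  | n + 1 =>
    match g n with
    | none => acc n
    | some u => acc n ++ subAll u (acc n)

theorem acc_mono {m n : ℕ} (h : m ≤ n) {p : List Bool} (hp : p ∈ acc g m) : p ∈ acc g n := by
  induction n with
  | zero => rw [Nat.le_zero.1 h] at hp; exact hp
  | succ n ih =>
    rcases Nat.lt_or_ge m (n+1) with h' | h'
    · have := ih (by omega)
      rw [acc]
      cases g n with
      | none => exact this
      | some u => exact List.mem_append_left _ this
    · have : m = n + 1 := by omega
      subst this
      exact hp

theorem DP_acc (n : ℕ) : DP (acc g n) := by
  induction n with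
  | zero => intro p hp; simp [acc] at hp
  | succ n ih =>
    rw [acc]
    cases hg : g n with
    | none => exact ih
    | some u =>
      intro p hp q hq hne
      rw [List.mem_append] at hp hq
      have hnew : ∀ r ∈ subAll u (acc g n), cyl r ⊆ cyl u \ region (acc g n) := by
        intro r hr
        rw [← region_subAll u (acc g n)]
        exact fun x hx => Set.mem_biUnion hr hx
      rcases hp with hp | hp <;> rcases hq with hq | hq
      · exact ih p hp q hq hne
      · refine Set.disjoint_left.2 fun x hxp hxq => ?_
        have := (hnew q hq hxq).2
        exact this (Set.mem_biUnion hp hxp)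
      · refine Set.disjoint_left.2 fun x hxp hxq => ?_
        have := (hnew p hp hxp).2
        exact this (Set.mem_biUnion hq hxq)
      · exact DP_subAll u (acc g n) p hp q hq hne

theorem region_append (L1 L2 : List (List Bool)) :
    region (L1 ++ L2) = region L1 ∪ region L2 := by
  ext x
  simp only [region, Set.mem_iUnion, Set.mem_union, List.mem_append]
  constructor
  · rintro ⟨p, hp | hp, hx⟩
    exacts [Or.inl ⟨p, hp, hx⟩, Or.inr ⟨p, hp, hx⟩]
  · rintro (⟨p, hp, hx⟩ | ⟨p, hp, hx⟩)
    exacts [⟨p, Or.inl hp, hx⟩, ⟨p, Or.inr hp, hx⟩]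

theorem region_acc_succ {n : ℕ} {u : List Bool} (hg : g n = some u) :
    region (acc g (n + 1)) = region (acc g n) ∪ cyl u := by
  show region (match g n with
    | none => acc g n
    | some u => acc g n ++ subAll u (acc g n)) = _
  rw [hg]
  rw [region_append, region_subAll, Set.union_diff_self]

theorem region_acc_succ_none {n : ℕ} (hg : g n = none) :
    region (acc g (n + 1)) = region (acc g n) := by
  show region (match g n with
    | none => acc g n
    | some u => acc g n ++ subAll u (acc g n)) = _
  rw [hg]

end Acc

section Aset

variable (g : ℕ → Option (List Bool))

def Aset : Set (List Bool) := {p | ∃ n, p ∈ acc g n}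

theorem Aset_antichain : ∀ p ∈ Aset g, ∀ q ∈ Aset g, p <+: q → p = q := by
  rintro p ⟨m, hm⟩ q ⟨n, hn⟩ hpq
  by_contra hne
  have hp' := acc_mono g (le_max_left m n) hm
  have hq' := acc_mono g (le_max_right m n) hn
  have hdisj := DP_acc g (max m n) p hp' q hq' hne
  obtain ⟨x, hx⟩ := cyl_nonempty q
  exact Set.disjoint_left.1 hdisj (cyl_anti hpq hx) hx

theorem region_acc_sub_Aset (n : ℕ) : region (acc g n) ⊆ ⋃ p ∈ Aset g, cyl p := by
  intro x hx
  simp only [region, Set.mem_iUnion] at hx ⊢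
  obtain ⟨p, hp, hxp⟩ := hx
  exact ⟨p, ⟨n, hp⟩, hxp⟩

theorem Aset_union_eq {S : Set (List Bool)} (hg : ∀ u, u ∈ S ↔ ∃ n, g n = some u) :
    ⋃ p ∈ Aset g, cyl p = ⋃ u ∈ S, cyl u := by
  apply subset_antisymm
  · refine Set.iUnion₂_subset fun p hp => ?_
    obtain ⟨n, hn⟩ := hp
    have h1 : cyl p ⊆ region (acc g n) := fun x hx => Set.mem_biUnion hn hx
    refine h1.trans ?_
    -- region (acc g n) ⊆ ⋃ u ∈ S, cyl u
    clear hn h1 p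
    induction n with
    | zero => intro x hx; simp [acc, region] at hx
    | succ n ih =>
      cases hgn : g n with
      | none => rw [region_acc_succ_none g hgn]; exact ih
      | some u =>
        rw [region_acc_succ g hgn]
        refine Set.union_subset ih ?_
        exact fun x hx => Set.mem_biUnion ((hg u).2 ⟨n, hgn⟩) hx
  · refine Set.iUnion₂_subset fun u hu => ?_
    obtain ⟨n, hn⟩ := (hg u).1 hu
    have h1 : cyl u ⊆ region (acc g (n + 1)) := by
      rw [region_acc_succ g hn]
      exact Set.subset_union_right
    exact h1.trans (region_acc_sub_Aset g (n + 1))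

end Aset

/-! ### Concatenation powers -/

def Cset (A : Set (List Bool)) : ℕ → Set (List Bool)
  | 0 => {[]}
  | j + 1 => Set.image2 (· ++ ·) A (Cset A j)

def concats : ℕ → List (List Bool) → List (List Bool)
  | 0, _ => [[]]
  | j + 1, L => L.flatMap fun a => (concats j L).map fun s => a ++ s

theorem mem_concats_succ {j : ℕ} {L : List (List Bool)} {u : List Bool} :
    u ∈ concats (j + 1) L ↔ ∃ a ∈ L, ∃ s ∈ concats j L, a ++ s = u := by
  simp [concats, List.mem_flatMap, List.mem_map]

theorem concats_mono {L L' : List (List Bool)} (h : ∀ y ∈ L, y ∈ L') :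
    ∀ j, ∀ u ∈ concats j L, u ∈ concats j L' := by
  intro j
  induction j with
  | zero => intro u hu; exact hu
  | succ j ih =>
    intro u hu
    rw [mem_concats_succ] at hu ⊢
    obtain ⟨a, ha, s, hs, rfl⟩ := hu
    exact ⟨a, h a ha, s, ih s hs, rfl⟩

theorem Cset_iff_concats (g : ℕ → Option (List Bool)) {j : ℕ} {u : List Bool} :
    u ∈ Cset (Aset g) j ↔ ∃ n, u ∈ concats j (acc g n) := by
  induction j generalizing u with
  | zero => simp [Cset, concats]
  | succ j ih =>
    constructor
    · intro hu
      rw [Cset, Set.mem_image2] at hu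
      obtain ⟨a, ⟨n1, ha⟩, s, hs, rfl⟩ := hu
      obtain ⟨n2, hn2⟩ := ih.1 hs
      refine ⟨max n1 n2, ?_⟩
      rw [mem_concats_succ]
      exact ⟨a, acc_mono g (le_max_left n1 n2) ha, s,
        concats_mono (fun y hy => acc_mono g (le_max_right n1 n2) hy) j s hn2, rfl⟩
    · rintro ⟨n, hn⟩
      rw [mem_concats_succ] at hn
      obtain ⟨a, ha, s, hs, rfl⟩ := hn
      rw [Cset, Set.mem_image2]
      exact ⟨a, ⟨n, ha⟩, s, ih.2 ⟨n, hs⟩, rfl⟩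

/-! ### Weights -/

def weight (A : Set (List Bool)) : ℝ≥0∞ := ∑' u : A, w u

theorem w_append (a s : List Bool) : w (a ++ s) = w a * w s := by
  rw [w, w, w, List.length_append, pow_add]

theorem weight_Cset_le (A : Set (List Bool)) (j : ℕ) :
    weight (Cset A j) ≤ (weight A) ^ j := by
  induction j with
  | zero =>
    rw [pow_zero, weight]
    have : ∑' u : (Cset A 0), w u.1 = w [] := tsum_singleton ([] : List Bool) w
    rw [this, w]
    simp
  | succ j ih =>
    have hsurj : Function.Surjective
        (fun p : ↥A × ↥(Cset A j) => (⟨p.1.1 ++ p.2.1,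
          Set.mem_image2_of_mem p.1.2 p.2.2⟩ : ↥(Cset A (j + 1)))) := by
      rintro ⟨y, hy⟩
      rw [Cset, Set.mem_image2] at hy
      obtain ⟨a, ha, s, hs, rfl⟩ := hy
      exact ⟨(⟨a, ha⟩, ⟨s, hs⟩), rfl⟩
    calc weight (Cset A (j + 1)) ≤ ∑' p : ↥A × ↥(Cset A j), w (p.1.1 ++ p.2.1) := by
          refine (ENNReal.tsum_le_tsum_comp_of_surjective hsurj fun y => w y.1).trans ?_
          exact le_of_eq rfl
      _ = ∑' p : ↥A × ↥(Cset A j), w p.1.1 * w p.2.1 := tsum_congr fun p => w_append _ _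
      _ = weight A * weight (Cset A j) := by
          rw [ENNReal.tsum_prod (f := fun (a : ↥A) (s : ↥(Cset A j)) => w a.1 * w s.1)]
          calc ∑' (a : ↥A) (s : ↥(Cset A j)), w a.1 * w s.1
              = ∑' (a : ↥A), w a.1 * weight (Cset A j) := by
                refine tsum_congr fun a => ?_
                rw [ENNReal.tsum_mul_left]
                rfl
            _ = weight A * weight (Cset A j) := by rw [ENNReal.tsum_mul_right]; rfl
      _ ≤ weight A * weight A ^ j := mul_le_mul_right ih _
      _ = weight A ^ (j + 1) := by rw [pow_succ, mul_comm]

theorem exists_mem_Cset {A : Set (List Bool)} (j : ℕ) :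
    ∀ z : ℕ → Bool, (∀ k, seqTail z k ∈ ⋃ p ∈ A, cyl p) → ∃ u ∈ Cset A j, z ∈ cyl u := by
  induction j with
  | zero =>
    intro z _
    exact ⟨[], rfl, by rw [cyl_nil]; trivial⟩
  | succ j ih =>
    intro z hz
    have h0 : z ∈ ⋃ p ∈ A, cyl p := by
      have := hz 0
      rwa [seqTail_zero] at this
    simp only [Set.mem_iUnion] at h0
    obtain ⟨a, ha, hza⟩ := h0
    set y := seqTail z a.length with hy
    have hy' : ∀ k, seqTail y k ∈ ⋃ p ∈ A, cyl p := by
      intro k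
      rw [hy, seqTail_seqTail]
      exact hz (k + a.length)
    obtain ⟨s, hs, hys⟩ := ih y hy'
    exact ⟨a ++ s, Set.mem_image2_of_mem ha hs, mem_cyl_append.2 ⟨hza, hys⟩⟩

/-! ### Primitive recursiveness of the construction -/

open Primrec in
theorem primrec_takeD : Primrec₂ takeD := by
  have : Primrec fun p : ℕ × List Bool => (List.range p.1).map fun i => p.2.getD i false :=
    list_map (list_range.comp fst) (((list_getD false).comp (snd.comp fst) snd).to₂)
  exact this

open Primrec in
theorem primrec_prefixB : Primrec₂ prefixB := by
  have h1 : Primrec fun p : List Bool × List Bool => decide (p.1.length ≤ p.2.length) :=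
    (Primrec.nat_le.comp (list_length.comp fst) (list_length.comp snd)).decide
  have h2 : Primrec fun p : List Bool × List Bool => decide (p.1 = takeD p.1.length p.2) :=
    (Primrec.eq.comp fst (primrec_takeD.comp (list_length.comp fst) snd)).decide
  have : Primrec fun p : List Bool × List Bool =>
      (decide (p.1.length ≤ p.2.length) && decide (p.1 = takeD p.1.length p.2)) := by
    have hc : Primrec fun p : List Bool × List Bool =>
        cond (decide (p.1.length ≤ p.2.length)) (decide (p.1 = takeD p.1.length p.2)) false :=
      Primrec.cond h1 h2 (const false)
    refine hc.of_eq fun p => ?_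
    cases decide (p.1.length ≤ p.2.length) <;> simp
  exact this

open Primrec in
theorem primrec_minus : Primrec₂ minus := by
  have hc1 : PrimrecPred fun p : List Bool × List Bool => prefixB p.2 p.1 = true := by
    have := primrec_prefixB.comp (Primrec.snd (α := List Bool) (β := List Bool)) Primrec.fst
    refine (this.of_eq fun p => (Bool.decide_coe _).symm).primrecPred
  have hc2 : PrimrecPred fun p : List Bool × List Bool => prefixB p.1 p.2 = true := by
    have := primrec_prefixB.comp (Primrec.fst (α := List Bool) (β := List Bool)) Primrec.snd
    refine (this.of_eq fun p => (Bool.decide_coe _).symm).primrecPred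
  have hmap : Primrec fun p : List Bool × List Bool =>
      (List.range (p.2.length - p.1.length)).map (tstr p.1 p.2) := by
    refine list_map (list_range.comp (nat_sub.comp (list_length.comp snd)
      (list_length.comp fst))) ?_
    have hm : Primrec fun q : (List Bool × List Bool) × ℕ => q.1.1.length + q.2 :=
      nat_add.comp (list_length.comp (fst.comp fst)) snd
    have htk : Primrec fun q : (List Bool × List Bool) × ℕ =>
        takeD (q.1.1.length + q.2) q.1.2 :=
      primrec_takeD.comp hm (snd.comp fst)
    have hgd : Primrec fun q : (List Bool × List Bool) × ℕ =>
        [!(q.1.2.getD (q.1.1.length + q.2) false)] :=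
      list_cons.comp (Primrec.not.comp ((list_getD false).comp (snd.comp fst) hm)) (const [])
    exact (list_append.comp htk hgd).to₂
  have hsing : Primrec fun p : List Bool × List Bool => [p.1] :=
    list_cons.comp fst (const [])
  exact Primrec.ite hc1 (const []) (Primrec.ite hc2 hmap hsing)

open Primrec in
theorem primrec_sub1 : Primrec₂ sub1 := by
  have : Primrec fun p : List (List Bool) × List Bool =>
      p.1.flatMap fun q => minus q p.2 :=
    list_flatMap fst (primrec_minus.comp snd (snd.comp fst))
  exact this

open Primrec in
theorem primrec_subAll : Primrec₂ subAll := by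
  have : Primrec fun p : List Bool × List (List Bool) =>
      p.2.foldl (fun s b => sub1 s b) [p.1] :=
    list_foldl snd (list_cons.comp fst (const []))
      ((primrec_sub1.comp (fst.comp snd) (snd.comp snd)).to₂)
  exact this

open Primrec in
theorem primrec_acc {ge : ℕ → Option (List Bool)} (hg : Primrec ge) : Primrec (acc ge) := by
  have hstep : Primrec₂ fun (_ : ℕ) (q : ℕ × List (List Bool)) =>
      (Option.casesOn (ge q.1) q.2 fun u => q.2 ++ subAll u q.2 : List (List Bool)) := by
    refine (Primrec.option_casesOn (o := fun p : ℕ × ℕ × List (List Bool) => ge p.2.1)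
      (f := fun p : ℕ × ℕ × List (List Bool) => p.2.2)
      (g := fun (p : ℕ × ℕ × List (List Bool)) u => p.2.2 ++ subAll u p.2.2)
      (hg.comp (fst.comp snd)) (snd.comp snd) ?_).to₂
    exact (list_append.comp (snd.comp (snd.comp fst))
      (primrec_subAll.comp snd (snd.comp (snd.comp fst)))).to₂
  have h := Primrec.nat_rec' (f := fun n : ℕ => n) (g := fun _ : ℕ => ([] : List (List Bool)))
    (h := fun _ q => Option.casesOn (ge q.1) q.2 fun u => q.2 ++ subAll u q.2)
    Primrec.id (const ([] : List (List Bool))) hstep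
  refine h.of_eq fun n => ?_
  induction n with
  | zero => rfl
  | succ n ih =>
    have hh : acc ge (n + 1) = Option.casesOn (ge n) (acc ge n)
        fun u => acc ge n ++ subAll u (acc ge n) := by
      rw [acc]
      cases ge n <;> rfl
    rw [hh, ← ih]

open Primrec in
theorem primrec_concats : Primrec₂ concats := by
  have hstep : Primrec₂ fun (L : List (List Bool)) (q : ℕ × List (List Bool)) =>
      L.flatMap fun a => q.2.map fun s => a ++ s := by
    refine (list_flatMap (f := fun p : List (List Bool) × ℕ × List (List Bool) => p.1)
      (g := fun (p : List (List Bool) × ℕ × List (List Bool)) a => p.2.2.map fun s => a ++ s)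
      fst ?_).to₂
    refine (list_map (f := fun q : (List (List Bool) × ℕ × List (List Bool)) × List Bool => q.1.2.2)
      (g := fun (q : (List (List Bool) × ℕ × List (List Bool)) × List Bool) s => q.2 ++ s)
      (snd.comp (snd.comp fst)) ?_)
    exact (list_append.comp (snd.comp fst) snd).to₂
  have h := Primrec.nat_rec' (f := fun p : ℕ × List (List Bool) => p.1)
    (g := fun _ : ℕ × List (List Bool) => ([[]] : List (List Bool)))
    (h := fun p q => p.2.flatMap fun a => q.2.map fun s => a ++ s)
    Primrec.fst (const ([[]] : List (List Bool)))
    ((hstep.comp (Primrec.snd.comp Primrec.fst) Primrec.snd).to₂)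
  have h2 : Primrec fun p : ℕ × List (List Bool) => concats p.1 p.2 := by
    refine h.of_eq fun p => ?_
    obtain ⟨j, L⟩ := p
    induction j with
    | zero => rfl
    | succ j ih =>
      have hh : concats (j + 1) L = L.flatMap fun a => (concats j L).map fun s => a ++ s := rfl
      rw [hh, ← ih]
  exact h2

theorem foldl_mem_aux (u : List Bool) :
    ∀ (L : List (List Bool)) (b : Bool),
      L.foldl (fun b v => b || decide (v = u)) b = (b || decide (u ∈ L)) := by
  intro L
  induction L with
  | nil => intro b; simp
  | cons v L ih =>
    intro b
    rw [List.foldl_cons, ih]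
    by_cases h : v = u <;> by_cases hm : u ∈ L <;>
      cases b <;> simp [h, hm, List.mem_cons, eq_comm]
    exact fun hc => h hc.symm

open Primrec in
theorem primrec_memB : Primrec₂ fun (u : List Bool) (L : List (List Bool)) => decide (u ∈ L) := by
  have hb : Primrec fun q : (List Bool × List (List Bool)) × Bool × List Bool =>
      (q.2.1 || decide (q.2.2 = q.1.1)) := by
    have hc : Primrec fun q : (List Bool × List (List Bool)) × Bool × List Bool =>
        cond q.2.1 true (decide (q.2.2 = q.1.1)) :=
      Primrec.cond (fst.comp snd) (const true)
        (Primrec.eq.comp (snd.comp snd) (fst.comp fst)).decide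
    refine hc.of_eq fun q => ?_
    cases q.2.1 <;> simp
  have h : Primrec fun p : List Bool × List (List Bool) =>
      p.2.foldl (fun s b => s || decide (b = p.1)) false :=
    list_foldl (f := fun p : List Bool × List (List Bool) => p.2)
      (g := fun _ => false) (h := fun p sb => sb.1 || decide (sb.2 = p.1))
      snd (const false) hb.to₂
  refine h.of_eq fun p => ?_
  rw [foldl_mem_aux p.1 p.2 false, Bool.false_or]

/-! ### Backward direction assembled -/

theorem backward_dir {U : Set (ℕ → Bool)} (hopen : EffOpenIn triv U) (hmeas : cmeas U < 1)
    {x : ℕ → Bool} (hx : ∀ k, seqTail x k ∈ U) : ¬ MLRandomIn triv x := by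
  obtain ⟨S, ⟨f0, hf0, hf0S⟩, hUS⟩ := hopen
  obtain ⟨D0, hD0, hD0dom⟩ := sigma1_of_partrecIn hf0
  set ge : ℕ → Option (List Bool) := fun n =>
    (Encodable.decode n.unpair.1 : Option (List Bool)).bind fun u =>
      bif D0 u n.unpair.2 then some u else none with hge
  have hgePrim : Primrec ge := by
    refine Primrec.option_bind (Primrec.decode.comp (Primrec.fst.comp Primrec.unpair)) ?_
    exact (Primrec.cond
      (hD0.comp Primrec.snd (Primrec.snd.comp (Primrec.unpair.comp Primrec.fst)))
      (Primrec.option_some.comp Primrec.snd) (Primrec.const none)).to₂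
  have hgiff : ∀ u, u ∈ S ↔ ∃ n, ge n = some u := by
    intro u
    rw [hf0S u, hD0dom u]
    constructor
    · rintro ⟨m, hm⟩
      refine ⟨Nat.pair (Encodable.encode u) m, ?_⟩
      simp [hge, Nat.unpair_pair, Encodable.encodek, hm]
    · rintro ⟨n, hn⟩
      simp only [hge, Option.bind_eq_some_iff] at hn
      obtain ⟨v, hv, hcond⟩ := hn
      cases hD : D0 v n.unpair.2
      · rw [hD] at hcond; simp at hcond
      · rw [hD] at hcond
        simp only [cond_true, Option.some_inj] at hcond
        subst hcond
        exact ⟨n.unpair.2, hD⟩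
  have hAunion : ⋃ p ∈ Aset ge, cyl p = U := by
    rw [Aset_union_eq ge hgiff]
    exact hUS.symm
  have hwA : weight (Aset ge) ≤ cmeas U :=
    (tsum_antichain_le _ (Aset_antichain ge)).trans_eq (by rw [hAunion])
  obtain ⟨k, hk⟩ : ∃ k, (cmeas U) ^ k < 2⁻¹ := by
    have h1 := ENNReal.tendsto_pow_atTop_nhds_zero_of_lt_one hmeas
    exact (h1.eventually (gt_mem_nhds (show (0:ℝ≥0∞) < 2⁻¹ by norm_num))).exists
  set P2 : (ℕ × List Bool) → ℕ → Bool :=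
    fun p n => decide (p.2 ∈ concats (k * p.1) (acc ge n)) with hP2
  have hP2prim : Primrec₂ P2 :=
    primrec_memB.comp (Primrec.snd.comp Primrec.fst)
      (primrec_concats.comp
        (Primrec.nat_mul.comp (Primrec.const k) (Primrec.fst.comp Primrec.fst))
        ((primrec_acc hgePrim).comp Primrec.snd))
  have hdom : ∀ m u, (fromPred P2 (m, u)).Dom ↔ u ∈ Cset (Aset ge) (k * m) := by
    intro m u
    rw [fromPred_dom, Cset_iff_concats ge]
    simp [hP2]
  set V : ℕ → Set (ℕ → Bool) := fun m => ⋃ u ∈ {u | (fromPred P2 (m, u)).Dom}, cyl u with hV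
  have hVtest : MLTestIn triv V := by
    constructor
    · exact ⟨fromPred P2, partrecIn_of_partrec (fromPred_partrec hP2prim), fun m => rfl⟩
    · intro m
      have hset : {u | (fromPred P2 (m, u)).Dom} = Cset (Aset ge) (k * m) :=
        Set.ext fun u => hdom m u
      have hVeq : V m = ⋃ u ∈ Cset (Aset ge) (k * m), cyl u := by
        show (⋃ u ∈ {u | (fromPred P2 (m, u)).Dom}, cyl u) = _
        rw [hset]
      rw [hVeq]
      refine (cmeas_biUnion_le _).trans ?_
      calc weight (Cset (Aset ge) (k * m)) ≤ (weight (Aset ge)) ^ (k * m) := weight_Cset_le _ _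
        _ ≤ (cmeas U) ^ (k * m) := pow_le_pow_left₀ (by simp) hwA _
        _ = ((cmeas U) ^ k) ^ m := by rw [pow_mul]
        _ ≤ (2⁻¹ : ℝ≥0∞) ^ m := pow_le_pow_left₀ (by simp) hk.le m
  have hxV : x ∈ ⋂ m, V m := by
    refine Set.mem_iInter.2 fun m => ?_
    have hx' : ∀ j, seqTail x j ∈ ⋃ p ∈ Aset ge, cyl p := fun j => by
      rw [hAunion]; exact hx j
    obtain ⟨u, hu, hxu⟩ := exists_mem_Cset (k * m) x hx'
    exact Set.mem_biUnion (show (fromPred P2 (m, u)).Dom from (hdom m u).2 hu) hxu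
  intro hrand
  exact hrand V hVtest hxV

end KuceraAux
/-- Kučera's lemma: if `U` is an effectively open set of measure
less than `1` containing all Martin-Löf non-random sequences, then `x` is
non-random iff every tail of `x` belongs to `U`. -/
theorem kucera_lemma (U : Set (ℕ → Bool))
    (hopen : EffOpenIn triv U) (hmeas : cmeas U < 1)
    (hcontains : ∀ y : ℕ → Bool, ¬ MLRandomIn triv y → y ∈ U)
    (x : ℕ → Bool) :
    ¬ MLRandomIn triv x ↔ ∀ k : ℕ, seqTail x k ∈ U := by
  constructor
  · intro h k
    exact hcontains _ (KuceraAux.nonrandom_tail h k)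
  · intro h
    exact KuceraAux.backward_dir hopen hmeas h
end KuceraAux
end

section
/- There exists a computably enumerable set $A \subseteq \mathbb{N}$ that is simple: $A$ is c.e., its complement is infinite, and $A$ intersects every infinite c.e. set. -/
open scoped Classical ENNReal

namespace PostSimple

open Nat.Partrec (Code)
open Nat.Partrec.Code

/-- Witness check: `n = ⟨s, x⟩` with `2e < x` and `x` converging in `e`'s domain by stage `s`. -/
def qB (e n : ℕ) : Bool :=
  decide (2 * e < n.unpair.2) &&
    (evaln n.unpair.1 (Denumerable.ofNat Code e) n.unpair.2).isSome

/-- The element (if any) enumerated into the simple set for the sake of `W_e`. -/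
noncomputable def psi (e : ℕ) : Option ℕ :=
  if h : ∃ n, qB e n = true then some (Nat.find h).unpair.2 else none

/-- Post's simple set. -/
def A : Set ℕ := {x | ∃ e, psi e = some x}

lemma foldl_or (f : ℕ → Bool) (c : Bool) :
    ∀ l : List ℕ, l.foldl (fun s b => s || f b) c = (c || l.any f)
  | [] => by simp
  | b :: l => by
      simp [foldl_or f (c || f b) l, Bool.or_assoc]

lemma foldl_and (f : ℕ → Bool) (c : Bool) :
    ∀ l : List ℕ, l.foldl (fun s b => s && f b) c = (c && l.all f)
  | [] => by simp
  | b :: l => by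
      simp [foldl_and f (c && f b) l, Bool.and_assoc]

/-- `e` has not yet had a witness before stage-code `n`. -/
def MB (e n : ℕ) : Bool := (List.range n).foldl (fun t m => t && !(qB e m)) true

/-- Enumeration predicate for `A`. -/
def RB (x n : ℕ) : Bool :=
  (List.range x).foldl
    (fun s e => s || (qB e n && decide (n.unpair.2 = x) && MB e n)) false

lemma MB_iff {e n : ℕ} : MB e n = true ↔ ∀ m < n, qB e m = false := by
  simp only [MB, foldl_and, Bool.true_and, List.all_eq_true, List.mem_range]
  constructor
  · intro h m hm
    simpa using h m hm
  · intro h m hm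
    simpa using h m hm

lemma RB_iff {x n : ℕ} : RB x n = true ↔
    ∃ e < x, qB e n = true ∧ n.unpair.2 = x ∧ ∀ m < n, qB e m = false := by
  simp only [RB, foldl_or, Bool.false_or, List.any_eq_true, List.mem_range,
    Bool.and_eq_true, decide_eq_true_eq]
  constructor
  · rintro ⟨e, he, ⟨hq, hx⟩, hm⟩
    exact ⟨e, he, hq, hx, MB_iff.1 hm⟩
  · rintro ⟨e, he, hq, hx, hm⟩
    exact ⟨e, he, ⟨hq, hx⟩, MB_iff.2 hm⟩

lemma qB_spec {e n : ℕ} (h : qB e n = true) :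
    2 * e < n.unpair.2 ∧
      ∃ y, y ∈ evaln n.unpair.1 (Denumerable.ofNat Code e) n.unpair.2 := by
  simpa [qB, Option.isSome_iff_exists] using h

lemma mem_A_iff {x : ℕ} : x ∈ A ↔ ∃ n, RB x n = true := by
  constructor
  · rintro ⟨e, he⟩
    rw [psi] at he
    split_ifs at he with h
    · have hx := Option.some_inj.1 he
      refine ⟨Nat.find h, RB_iff.2 ⟨e, ?_, Nat.find_spec h, hx, ?_⟩⟩
      · have h2 := (qB_spec (Nat.find_spec h)).1
        rw [hx] at h2
        omega
      · intro m hm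
        simpa using Nat.find_min h hm
  · rintro ⟨n, hn⟩
    obtain ⟨e, _, hq, hx, hmin⟩ := RB_iff.1 hn
    have h : ∃ m, qB e m = true := ⟨n, hq⟩
    have hle := Nat.find_min' h hq
    have hfind : Nat.find h = n := by
      rcases lt_trichotomy (Nat.find h) n with hlt | heq | hgt
      · have hsp := Nat.find_spec h
        rw [hmin _ hlt] at hsp
        exact absurd hsp (by simp)
      · exact heq
      · omega
    refine ⟨e, ?_⟩
    rw [psi, dif_pos h, hfind, hx]

lemma psi_spec {e x : ℕ} (h : psi e = some x) :
    2 * e < x ∧ ((Denumerable.ofNat Code e).eval x).Dom := by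
  rw [psi] at h
  split_ifs at h with hh
  · have hx := Option.some_inj.1 h
    obtain ⟨h1, y, hy⟩ := qB_spec (Nat.find_spec hh)
    rw [hx] at h1 hy
    exact ⟨h1, Part.dom_iff_mem.2 ⟨_, evaln_sound hy⟩⟩

lemma qB_primrec : Primrec₂ qB := by
  have h1 : Primrec₂ fun (e n : ℕ) => decide (2 * e < n.unpair.2) :=
    PrimrecPred.decide (Primrec.nat_lt.comp
      (Primrec.nat_mul.comp (Primrec.const 2) Primrec.fst)
      (Primrec.snd.comp (Primrec.unpair.comp Primrec.snd)))
  have h2 : Primrec₂ fun (e n : ℕ) =>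
      (evaln n.unpair.1 (Denumerable.ofNat Code e) n.unpair.2).isSome :=
    Primrec.option_isSome.comp (primrec_evaln.comp
      (((Primrec.fst.comp (Primrec.unpair.comp Primrec.snd)).pair
        ((Primrec.ofNat Code).comp Primrec.fst)).pair
        (Primrec.snd.comp (Primrec.unpair.comp Primrec.snd))))
  exact Primrec.and.comp h1 h2

lemma MB_primrec : Primrec₂ MB := by
  have hh : Primrec₂ fun (a : ℕ × ℕ) (q : Bool × ℕ) => q.1 && !(qB a.1 q.2) :=
    Primrec₂.comp Primrec.and (Primrec.fst.comp Primrec.snd)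
      (Primrec.not.comp (qB_primrec.comp (Primrec.fst.comp Primrec.fst)
        (Primrec.snd.comp Primrec.snd)))
  have H := Primrec.list_foldl (f := fun p : ℕ × ℕ => List.range p.2)
      (g := fun _ : ℕ × ℕ => true)
      (h := fun (a : ℕ × ℕ) (q : Bool × ℕ) => q.1 && !(qB a.1 q.2))
      (Primrec.list_range.comp Primrec.snd) (Primrec.const true) hh
  exact H.of_eq fun p => rfl

set_option maxHeartbeats 1000000 in
lemma RB_primrec : Primrec₂ RB := by
  have hinner : Primrec₂ fun (p : ℕ × ℕ) (q : Bool × ℕ) =>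
      (q.1 || (qB q.2 p.2 && decide (p.2.unpair.2 = p.1) && MB q.2 p.2)) := by
    refine Primrec₂.comp Primrec.or (Primrec.fst.comp Primrec.snd) ?_
    refine Primrec₂.comp Primrec.and ?_ ?_
    · refine Primrec₂.comp Primrec.and ?_ ?_
      · exact qB_primrec.comp (Primrec.snd.comp Primrec.snd)
          (Primrec.snd.comp Primrec.fst)
      · exact PrimrecPred.decide ((Primrec.eq (α := ℕ)).comp
          (Primrec.snd.comp (Primrec.unpair.comp (Primrec.snd.comp Primrec.fst)))
          (Primrec.fst.comp Primrec.fst))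
    · exact MB_primrec.comp (Primrec.snd.comp Primrec.snd)
        (Primrec.snd.comp Primrec.fst)
  have H := Primrec.list_foldl (f := fun p : ℕ × ℕ => List.range p.1)
      (g := fun _ : ℕ × ℕ => false)
      (h := fun (p : ℕ × ℕ) (q : Bool × ℕ) =>
        q.1 || (qB q.2 p.2 && decide (p.2.unpair.2 = p.1) && MB q.2 p.2))
      (Primrec.list_range.comp Primrec.fst) (Primrec.const false) hinner
  exact H.of_eq fun p => rfl

lemma A_re : REPred (· ∈ A) := by
  have hf : Partrec fun x : ℕ => Nat.rfind fun n => Part.some (RB x n) :=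
    Partrec.rfind (RB_primrec.to_comp.partrec₂)
  have := hf.dom_re
  have heq : (· ∈ A) = fun x : ℕ => (Nat.rfind fun n => Part.some (RB x n)).Dom := by
    funext x
    apply propext
    rw [mem_A_iff]
    refine Iff.trans ?_ (Nat.rfind_dom (p := fun n => Part.some (RB x n))).symm
    constructor
    · rintro ⟨n, hn⟩
      classical
      exact ⟨Nat.find ⟨n, hn⟩, by simpa using Nat.find_spec (⟨n, hn⟩ : ∃ n, RB x n = true),
        fun _ => trivial⟩
    · rintro ⟨n, hn, _⟩
      exact ⟨n, by simpa using hn⟩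
  rw [heq]
  exact this

end PostSimple

/-- Post: there exists a simple set: a c.e. set with infinite
complement meeting every infinite c.e. set. -/
theorem exists_simple_set :
    ∃ A : Set ℕ, REPred (· ∈ A) ∧ (Aᶜ).Infinite ∧
      ∀ W : Set ℕ, REPred (· ∈ W) → W.Infinite → (A ∩ W).Nonempty := by
  classical
  refine ⟨PostSimple.A, PostSimple.A_re, ?_, ?_⟩
  · -- complement infinite
    -- counting: A ∩ [0, 2n] has at most n elements
    have key : ∀ n : ℕ, ((Finset.range (2 * n + 1)).filter (· ∈ PostSimple.A)).card ≤ n := by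
      intro n
      have : ((Finset.range (2 * n + 1)).filter (· ∈ PostSimple.A)).card ≤
          (Finset.range n).card := by
        apply Finset.card_le_card_of_injOn
          (fun x => if h : ∃ e, PostSimple.psi e = some x then Nat.find h else 0)
        · intro x hx
          simp only [Finset.mem_coe, Finset.mem_filter, Finset.mem_range] at hx
          obtain ⟨hxr, hxA⟩ := hx
          have hxA' : ∃ e, PostSimple.psi e = some x := hxA
          beta_reduce
          rw [dif_pos hxA']
          have hspec := Nat.find_spec hxA'
          have := (PostSimple.psi_spec hspec).1
          simp only [Finset.mem_coe, Finset.mem_range]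
          omega
        · intro x hx y hy hxy
          simp only [Finset.mem_coe, Finset.mem_filter] at hx hy
          obtain ⟨_, hxA⟩ := hx
          obtain ⟨_, hyA⟩ := hy
          have hxA' : ∃ e, PostSimple.psi e = some x := hxA
          have hyA' : ∃ e, PostSimple.psi e = some y := hyA
          simp only [] at hxy
          rw [dif_pos hxA', dif_pos hyA'] at hxy
          have h1 := Nat.find_spec hxA'
          have h2 := Nat.find_spec hyA'
          rw [hxy] at h1
          rw [h1] at h2
          exact Option.some_inj.1 h2
      simpa using this
    intro hfin
    set k := hfin.toFinset.card with hk
    have h1 := key k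
    have h2 : ((Finset.range (2 * k + 1)).filter (fun x => ¬ x ∈ PostSimple.A)).card ≤ k := by
      refine le_trans (Finset.card_le_card ?_) le_rfl
      intro x hx
      simp only [Finset.mem_filter, Finset.mem_range] at hx
      rw [Set.Finite.mem_toFinset]
      exact hx.2
    have h3 := Finset.card_filter_add_card_filter_not
      (s := Finset.range (2 * k + 1)) (p := (· ∈ PostSimple.A))
    simp only [Finset.card_range] at h3
    omega
  · -- A meets every infinite c.e. set
    intro W hW hWinf
    -- get a code for W
    have hpart : Partrec fun a : ℕ =>
        (Part.assert (a ∈ W) fun _ => Part.some ()).map fun _ => (0 : ℕ) :=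
      Partrec.map hW ((Computable.const 0).comp Computable.fst).to₂
    obtain ⟨c, hc⟩ := Nat.Partrec.Code.exists_code.1 (Partrec.nat_iff.1 hpart)
    set e := Encodable.encode c with he
    have hce : Denumerable.ofNat Nat.Partrec.Code e = c := by
      simp [he]
    have hdom : ∀ x, ((Denumerable.ofNat Nat.Partrec.Code e).eval x).Dom ↔ x ∈ W := by
      intro x
      rw [hce, hc]
      simp [Part.dom_iff_mem]
    -- W infinite gives an element > 2e
    obtain ⟨x, hxW, hxgt⟩ := hWinf.exists_gt (2 * e)
    -- so there is a witness for e
    have hx : ((Denumerable.ofNat Nat.Partrec.Code e).eval x).Dom := (hdom x).2 hxW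
    obtain ⟨y, hy⟩ := Part.dom_iff_mem.1 hx
    obtain ⟨s, hs⟩ := Nat.Partrec.Code.evaln_complete.1 hy
    have hq : ∃ n, PostSimple.qB e n = true := by
      refine ⟨Nat.pair s x, ?_⟩
      simp only [PostSimple.qB, Nat.unpair_pair, Bool.and_eq_true, decide_eq_true_eq]
      exact ⟨hxgt, Option.isSome_iff_exists.2 ⟨y, hs⟩⟩
    have hpsi : PostSimple.psi e = some (Nat.find hq).unpair.2 := by
      rw [PostSimple.psi, dif_pos hq]
    refine ⟨(Nat.find hq).unpair.2, ⟨e, hpsi⟩, ?_⟩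
    have := (PostSimple.psi_spec hpsi).2
    exact (hdom _).1 this
end
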